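/- arXiv:2401.05721 — 3 statements merged into one kernel-verified Lean document; each statement's English description precedes it below -/
import Mathlib

section
/- Let n ≥ 1 and let β be a connected permutation of {1,…,2n} (i.e., some cycle of β contains both an element of {1,…,n} and an element of {n+1,…,2n}). Then |γ_{n,n}⁻¹β| + |β| ≥ 2n. -/
/-!
For a permutation `σ` of a finite set of size `m`, `cycleCount σ` is the number of cycles
(fixed points count as cycles) and `permLen σ = m - cycleCount σ` (the minimal number of
transpositions needed to write `σ`).  We model `{1,…,2n}` as `Fin n ⊕ Fin n`, the first
summand being `{1,…,n}` and the second `{n+1,…,2n}`.  `gammaNN n` is the product of the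
two `n`-cycles `(1,2,…,n)` and `(n+1,…,2n)`.
-/

/-- The number of cycles of a permutation, where fixed points count as cycles. -/
noncomputable def cycleCount {α : Type*} [Fintype α] [DecidableEq α]
    (σ : Equiv.Perm α) : ℕ :=
  Multiset.card σ.cycleType + (Fintype.card α - σ.support.card)

/-- `|σ| = m - #(σ)`, the minimal number of transpositions whose product is `σ`. -/
noncomputable def permLen {α : Type*} [Fintype α] [DecidableEq α]
    (σ : Equiv.Perm α) : ℕ :=
  Fintype.card α - cycleCount σ

/-- `γ_{n,n}`: the product of the two `n`-cycles `(1,…,n)` and `(n+1,…,2n)`. -/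
def gammaNN (n : ℕ) : Equiv.Perm (Fin n ⊕ Fin n) :=
  Equiv.sumCongr (finRotate n) (finRotate n)

/-- A permutation of `{1,…,2n}` is connected if some cycle of it contains both an
element of `{1,…,n}` and an element of `{n+1,…,2n}`. -/
def IsConnectedPerm {n : ℕ} (β : Equiv.Perm (Fin n ⊕ Fin n)) : Prop :=
  ∃ a b : Fin n, β.SameCycle (Sum.inl a) (Sum.inr b)

open Equiv Equiv.Perm Relation



set_option linter.unusedSectionVars false
section
variable {α : Type*} [Fintype α] [DecidableEq α]

/-- one-step relation of a permutation -/
def prRel (σ : Perm α) : α → α → Prop := fun x y => σ x = y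

noncomputable def kq (r : α → α → Prop) : ℕ := Nat.card (Quotient (EqvGen.setoid r))

noncomputable def ks (σ : Perm α) : ℕ := Nat.card (Quotient (Equiv.Perm.SameCycle.setoid σ))

lemma eqvGen_flatten {r r' : α → α → Prop} (hr : ∀ u v, r u v → EqvGen r' u v) {x y : α}
    (h : EqvGen r x y) : EqvGen r' x y := by
  induction h with
  | rel u v huv => exact hr u v huv
  | refl u => exact EqvGen.refl u
  | symm u v _ ih => exact EqvGen.symm _ _ ih
  | trans u v w _ _ ih1 ih2 => exact EqvGen.trans _ _ _ ih1 ih2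

lemma sameCycle_iff_eqvGen (σ : Perm α) (x y : α) :
    σ.SameCycle x y ↔ EqvGen (prRel σ) x y := by
  constructor
  · intro h
    obtain ⟨i, -, rfl⟩ := h.exists_pow_eq'
    clear h
    induction i with
    | zero => simpa using EqvGen.refl x
    | succ k ih =>
      refine EqvGen.trans _ _ _ ih (EqvGen.rel _ _ ?_)
      show σ ((σ ^ k) x) = (σ ^ (k+1)) x
      rw [pow_succ', Perm.mul_apply]
  · intro h
    induction h with
    | rel u v huv => exact ⟨1, by rw [zpow_one]; exact huv⟩
    | refl u => exact SameCycle.refl _ _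
    | symm u v _ ih => exact ih.symm
    | trans u v w _ _ ih1 ih2 => exact ih1.trans ih2

lemma sameCycle_setoid_eq (σ : Perm α) :
    Equiv.Perm.SameCycle.setoid σ = EqvGen.setoid (prRel σ) :=
  Setoid.ext fun x y => sameCycle_iff_eqvGen σ x y

lemma ks_eq_kq (σ : Perm α) : ks σ = kq (prRel σ) := by
  unfold ks kq; rw [sameCycle_setoid_eq]

lemma kq_le {r r' : α → α → Prop} (h : ∀ x y, r x y → EqvGen r' x y) : kq r' ≤ kq r := by
  apply Nat.card_le_card_of_surjective
    (Quotient.map' (id : α → α) (fun a b hab => eqvGen_flatten h hab))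
  intro q
  induction q using Quotient.ind
  exact ⟨Quotient.mk'' _, rfl⟩

lemma eqvGen_or_decomp {r : α → α → Prop} {a b x y : α}
    (h : EqvGen (fun u v => r u v ∨ (u = a ∧ v = b)) x y) :
    EqvGen r x y ∨ (EqvGen r x a ∧ EqvGen r b y) ∨ (EqvGen r x b ∧ EqvGen r a y) := by
  induction h with
  | rel u v huv =>
    rcases huv with h | ⟨rfl, rfl⟩
    · exact Or.inl (EqvGen.rel _ _ h)
    · exact Or.inr (Or.inl ⟨EqvGen.refl _, EqvGen.refl _⟩)
  | refl u => exact Or.inl (EqvGen.refl u)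
  | symm u v _ ih =>
    rcases ih with h | ⟨h1, h2⟩ | ⟨h1, h2⟩
    · exact Or.inl (EqvGen.symm _ _ h)
    · exact Or.inr (Or.inr ⟨EqvGen.symm _ _ h2, EqvGen.symm _ _ h1⟩)
    · exact Or.inr (Or.inl ⟨EqvGen.symm _ _ h2, EqvGen.symm _ _ h1⟩)
  | trans u v w _ _ ih1 ih2 =>
    rcases ih1 with h | ⟨p, q⟩ | ⟨p, q⟩ <;> rcases ih2 with g | ⟨p', q'⟩ | ⟨p', q'⟩
    · exact Or.inl (EqvGen.trans _ _ _ h g)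
    · exact Or.inr (Or.inl ⟨EqvGen.trans _ _ _ h p', q'⟩)
    · exact Or.inr (Or.inr ⟨EqvGen.trans _ _ _ h p', q'⟩)
    · exact Or.inr (Or.inl ⟨p, EqvGen.trans _ _ _ q g⟩)
    · exact Or.inr (Or.inl ⟨p, q'⟩)
    · exact Or.inl (EqvGen.trans _ _ _ p q')
    · exact Or.inr (Or.inr ⟨p, EqvGen.trans _ _ _ q g⟩)
    · exact Or.inl (EqvGen.trans _ _ _ p q')
    · exact Or.inr (Or.inr ⟨p, q'⟩)

lemma kq_le_merge (r : α → α → Prop) (a b : α) :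
    kq r ≤ kq (fun u v => r u v ∨ (u = a ∧ v = b)) + 1 := by
  classical
  set r2 : α → α → Prop := fun u v => r u v ∨ (u = a ∧ v = b) with hr2
  letI s := EqvGen.setoid r
  letI t := EqvGen.setoid r2
  haveI : Fintype (Quotient s) := Fintype.ofFinite _
  haveI : Fintype (Quotient t) := Fintype.ofFinite _
  set φ : Quotient s → Quotient t :=
    Quotient.map' (id : α → α) (fun u v huv =>
      eqvGen_flatten (fun p q hpq => EqvGen.rel p q (Or.inl hpq)) huv) with hφ
  have key : ∀ p q : Quotient s, p ≠ Quotient.mk'' b → q ≠ Quotient.mk'' b →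
      φ p = φ q → p = q := by
    intro p q hp hq hpq
    induction p using Quotient.inductionOn' with | h x => ?_
    induction q using Quotient.inductionOn' with | h y => ?_
    have : EqvGen r2 x y := Quotient.eq''.mp hpq
    rcases eqvGen_or_decomp this with h | ⟨h1, h2⟩ | ⟨h1, h2⟩
    · exact Quotient.sound' h
    · exact absurd (Quotient.eq''.mpr (EqvGen.symm _ _ h2)) hq
    · exact absurd (Quotient.eq''.mpr h1) hp
  have hinj : Set.InjOn φ ((Finset.univ.erase (Quotient.mk'' b : Quotient s)) : Finset _) := by
    intro p hp q hq hpq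
    exact key p q (Finset.ne_of_mem_erase hp) (Finset.ne_of_mem_erase hq) hpq
  have hcard := Finset.card_le_card_of_injOn φ (fun p _ => Finset.mem_univ (φ p)) hinj
  rw [Finset.card_erase_of_mem (Finset.mem_univ _)] at hcard
  have h1 : kq r = Fintype.card (Quotient s) := Nat.card_eq_fintype_card
  have h2 : kq r2 = Fintype.card (Quotient t) := Nat.card_eq_fintype_card
  simp only [Finset.card_univ] at hcard
  omega

lemma traj (ρ : Perm α) (a b : α) (i : ℕ)
    (h : ∀ m, 1 ≤ m → m ≤ i → (ρ ^ m) a ≠ a ∧ (ρ ^ m) a ≠ b) :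
    ((Equiv.swap a b * ρ) ^ i) a = (ρ ^ i) a := by
  induction i with
  | zero => simp
  | succ k ih =>
    have hk := ih (fun m h1 h2 => h m h1 (h2.trans (Nat.le_succ k)))
    rw [pow_succ', Perm.mul_apply, Perm.mul_apply, hk]
    have : ρ ((ρ ^ k) a) = (ρ ^ (k+1)) a := by rw [pow_succ', Perm.mul_apply]
    rw [this]
    exact Equiv.swap_apply_of_ne_of_ne (h (k+1) (Nat.le_add_left 1 k) le_rfl).1
      (h (k+1) (Nat.le_add_left 1 k) le_rfl).2

lemma period_lemma (ρ : Perm α) {a y : α} {j : ℕ} (hj : 0 < j) (ha : (ρ ^ j) a = a)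
    (h : ρ.SameCycle a y) : ∃ r < j, (ρ ^ r) a = y := by
  obtain ⟨i, -, rfl⟩ := h.exists_pow_eq'
  refine ⟨i % j, Nat.mod_lt _ hj, ?_⟩
  have hq : ∀ q, ((ρ ^ j) ^ q) a = a := by
    intro q
    induction q with
    | zero => simp
    | succ k ih => rw [pow_succ, Perm.mul_apply, ha, ih]
  calc (ρ ^ (i % j)) a = (ρ ^ (i % j)) (((ρ ^ j) ^ (i / j)) a) := by rw [hq]
    _ = (ρ ^ (i % j + j * (i / j))) a := by rw [pow_add, pow_mul, Perm.mul_apply]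
    _ = (ρ ^ i) a := by rw [Nat.mod_add_div]

lemma exists_pow_mem (ρ : Perm α) (a b : α) : ∃ j, 0 < j ∧ ((ρ ^ j) a = a ∨ (ρ ^ j) a = b) :=
  ⟨orderOf ρ, orderOf_pos ρ, Or.inl (by rw [pow_orderOf_eq_one]; rfl)⟩

lemma sameCycle_swap_mul_of_not {ρ : Perm α} {a b : α} (hab : a ≠ b)
    (h : ¬ ρ.SameCycle a b) : (Equiv.swap a b * ρ).SameCycle a b := by
  classical
  have hP := exists_pow_mem ρ a b
  set j := Nat.find hP with hj
  obtain ⟨hj0, hjab⟩ := Nat.find_spec hP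
  have hmin : ∀ m, m < j → ¬(0 < m ∧ ((ρ ^ m) a = a ∨ (ρ ^ m) a = b)) := fun m hm => Nat.find_min hP hm
  have hja : (ρ ^ j) a = a := by
    rcases hjab with h' | h'
    · exact h'
    · exact absurd ⟨(j : ℤ), by simpa using h'⟩ h
  have htraj : ((Equiv.swap a b * ρ) ^ (j - 1)) a = (ρ ^ (j - 1)) a := by
    refine traj ρ a b _ (fun m h1 h2 => ?_)
    have hmj : m < j := lt_of_le_of_lt h2 (Nat.pred_lt hj0.ne')
    constructor
    · intro hc; exact hmin m hmj ⟨h1, Or.inl hc⟩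
    · intro hc; exact hmin m hmj ⟨h1, Or.inr hc⟩
  have hkey : ((Equiv.swap a b * ρ) ^ j) a = b := by
    have hj1 : j - 1 + 1 = j := Nat.succ_pred_eq_of_pos hj0
    rw [← hj1, pow_succ', Perm.mul_apply, htraj, Perm.mul_apply]
    have : ρ ((ρ ^ (j-1)) a) = (ρ ^ j) a := by conv_rhs => rw [← hj1, pow_succ', Perm.mul_apply]
    rw [this, hja, Equiv.swap_apply_left]
  exact ⟨(j : ℤ), by simpa using hkey⟩

lemma not_sameCycle_swap_mul {ρ : Perm α} {a b : α} (hab : a ≠ b)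
    (h : ρ.SameCycle a b) : ¬ (Equiv.swap a b * ρ).SameCycle a b := by
  classical
  have hP := exists_pow_mem ρ a b
  set j := Nat.find hP with hj
  obtain ⟨hj0, hjab⟩ := Nat.find_spec hP
  have hmin : ∀ m, m < j → ¬(0 < m ∧ ((ρ ^ m) a = a ∨ (ρ ^ m) a = b)) := fun m hm => Nat.find_min hP hm
  have hjb : (ρ ^ j) a = b := by
    rcases hjab with h' | h'
    · obtain ⟨r, hr, hrb⟩ := period_lemma ρ hj0 h' h
      rcases Nat.eq_zero_or_pos r with rfl | hr0
      · exact absurd (by simpa using hrb) hab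
      · exact absurd ⟨hr0, Or.inr hrb⟩ (hmin r hr)
    · exact h'
  have htraj : ((Equiv.swap a b * ρ) ^ (j - 1)) a = (ρ ^ (j - 1)) a := by
    refine traj ρ a b _ (fun m h1 h2 => ?_)
    have hmj : m < j := lt_of_le_of_lt h2 (Nat.pred_lt hj0.ne')
    constructor
    · intro hc; exact hmin m hmj ⟨h1, Or.inl hc⟩
    · intro hc; exact hmin m hmj ⟨h1, Or.inr hc⟩
  have hfix : ((Equiv.swap a b * ρ) ^ j) a = a := by
    have hj1 : j - 1 + 1 = j := Nat.succ_pred_eq_of_pos hj0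
    rw [← hj1, pow_succ', Perm.mul_apply, htraj, Perm.mul_apply]
    have : ρ ((ρ ^ (j-1)) a) = (ρ ^ j) a := by conv_rhs => rw [← hj1, pow_succ', Perm.mul_apply]
    rw [this, hjb, Equiv.swap_apply_right]
  intro hcon
  obtain ⟨r, hr, hrb⟩ := period_lemma (Equiv.swap a b * ρ) hj0 hfix hcon
  rcases Nat.eq_zero_or_pos r with rfl | hr0
  · exact absurd (by simpa using hrb) hab
  · have : ((Equiv.swap a b * ρ) ^ r) a = (ρ ^ r) a := by
      refine traj ρ a b _ (fun m h1 h2 => ?_)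
      have hmj : m < j := lt_of_le_of_lt h2 hr
      constructor
      · intro hc; exact hmin m hmj ⟨h1, Or.inl hc⟩
      · intro hc; exact hmin m hmj ⟨h1, Or.inr hc⟩
    rw [this] at hrb
    exact hmin r hr ⟨hr0, Or.inr hrb⟩

lemma sameCycle_swap_mul_decomp {ρ : Perm α} {a b x y : α} (hab : a ≠ b)
    (h : (Equiv.swap a b * ρ).SameCycle x y) :
    ρ.SameCycle x y ∨ (ρ.SameCycle x a ∧ ρ.SameCycle b y) ∨
      (ρ.SameCycle x b ∧ ρ.SameCycle a y) := by
  have step : ∀ u v, prRel (Equiv.swap a b * ρ) u v →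
      EqvGen (fun u v => prRel ρ u v ∨ (u = a ∧ v = b)) u v := by
    intro u v huv
    have huv' : Equiv.swap a b (ρ u) = v := huv
    rcases eq_or_ne (ρ u) a with h1 | h1
    · have hv : v = b := by rw [← huv', h1, Equiv.swap_apply_left]
      subst hv
      exact EqvGen.trans _ _ _ (EqvGen.rel _ _ (Or.inl h1))
        (EqvGen.rel _ _ (Or.inr ⟨rfl, rfl⟩))
    rcases eq_or_ne (ρ u) b with h2 | h2
    · have hv : v = a := by rw [← huv', h2, Equiv.swap_apply_right]
      subst hv
      exact EqvGen.trans _ _ _ (EqvGen.rel _ _ (Or.inl h2))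
        (EqvGen.symm _ _ (EqvGen.rel _ _ (Or.inr ⟨rfl, rfl⟩)))
    · have hv : v = ρ u := by rw [← huv', Equiv.swap_apply_of_ne_of_ne h1 h2]
      exact EqvGen.rel _ _ (Or.inl hv.symm)
  have h' := eqvGen_flatten step ((sameCycle_iff_eqvGen _ _ _).mp h)
  rcases eqvGen_or_decomp h' with h'' | ⟨h1, h2⟩ | ⟨h1, h2⟩
  · exact Or.inl ((sameCycle_iff_eqvGen _ _ _).mpr h'')
  · exact Or.inr (Or.inl ⟨(sameCycle_iff_eqvGen _ _ _).mpr h1,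
      (sameCycle_iff_eqvGen _ _ _).mpr h2⟩)
  · exact Or.inr (Or.inr ⟨(sameCycle_iff_eqvGen _ _ _).mpr h1,
      (sameCycle_iff_eqvGen _ _ _).mpr h2⟩)

lemma ks_swap_mul_sameCycle {ρ : Perm α} {a b : α} (hab : a ≠ b)
    (h : ρ.SameCycle a b) : ks (Equiv.swap a b * ρ) = ks ρ + 1 := by
  classical
  set ρ' := Equiv.swap a b * ρ with hρ'
  have hnot : ¬ ρ'.SameCycle a b := not_sameCycle_swap_mul hab h
  have collapse : ∀ x y, ρ'.SameCycle x y → ρ.SameCycle x y := by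
    intro x y hxy
    rcases sameCycle_swap_mul_decomp hab hxy with h' | ⟨p, q⟩ | ⟨p, q⟩
    · exact h'
    · exact (p.trans h).trans q
    · exact (p.trans h.symm).trans q
  have hρρ' : ρ = Equiv.swap a b * ρ' := by
    rw [hρ', ← mul_assoc, Equiv.swap_mul_self, one_mul]
  have decomp2 : ∀ x y : α, ρ.SameCycle x y →
      ρ'.SameCycle x y ∨ (ρ'.SameCycle x a ∧ ρ'.SameCycle b y) ∨
        (ρ'.SameCycle x b ∧ ρ'.SameCycle a y) := by
    intro x y hxy
    rw [hρρ'] at hxy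
    exact sameCycle_swap_mul_decomp hab hxy
  letI s' := Equiv.Perm.SameCycle.setoid ρ'
  letI s := Equiv.Perm.SameCycle.setoid ρ
  haveI : Fintype (Quotient s') := Fintype.ofFinite _
  haveI : Fintype (Quotient s) := Fintype.ofFinite _
  set φ : Quotient s' → Quotient s :=
    Quotient.map' (id : α → α) (fun u v huv => collapse u v huv) with hφ
  have hb' : (Quotient.mk'' a : Quotient s') ≠ Quotient.mk'' b := by
    intro hcon
    exact hnot (Quotient.eq''.mp hcon)
  have key : ∀ p q : Quotient s', p ≠ Quotient.mk'' b → q ≠ Quotient.mk'' b →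
      φ p = φ q → p = q := by
    intro p q hp hq hpq
    induction p using Quotient.inductionOn' with | h x => ?_
    induction q using Quotient.inductionOn' with | h y => ?_
    have hxy : ρ.SameCycle x y := Quotient.eq''.mp hpq
    rcases decomp2 x y hxy with h' | ⟨p1, p2⟩ | ⟨p1, p2⟩
    · exact Quotient.sound' h'
    · exact absurd (Quotient.sound' p2.symm : (Quotient.mk'' y : Quotient s') = _) hq
    · exact absurd (Quotient.sound' p1 : (Quotient.mk'' x : Quotient s') = _) hp
  have hinj : Set.InjOn φ ((Finset.univ.erase (Quotient.mk'' b : Quotient s')) : Finset _) := by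
    intro p hp q hq hpq
    exact key p q (Finset.ne_of_mem_erase hp) (Finset.ne_of_mem_erase hq) hpq
  have himg : (Finset.univ.erase (Quotient.mk'' b : Quotient s')).image φ = Finset.univ := by
    apply Finset.eq_univ_of_forall
    intro z
    induction z using Quotient.inductionOn' with | h x => ?_
    rw [Finset.mem_image]
    by_cases hxb : ρ'.SameCycle x b
    · refine ⟨Quotient.mk'' a, Finset.mem_erase.mpr ⟨hb', Finset.mem_univ _⟩, ?_⟩
      show (Quotient.mk'' a : Quotient s) = Quotient.mk'' x
      exact Quotient.sound' (h.trans (collapse x b hxb).symm)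
    · refine ⟨Quotient.mk'' x, Finset.mem_erase.mpr ⟨?_, Finset.mem_univ _⟩, rfl⟩
      intro hcon
      exact hxb (Quotient.eq''.mp hcon)
  have hcard : Fintype.card (Quotient s) = Fintype.card (Quotient s') - 1 := by
    rw [← Finset.card_univ, ← himg, Finset.card_image_of_injOn hinj,
      Finset.card_erase_of_mem (Finset.mem_univ _), Finset.card_univ]
  have hpos : 0 < Fintype.card (Quotient s') := Fintype.card_pos_iff.mpr ⟨Quotient.mk'' b⟩
  have e1 : ks ρ' = Fintype.card (Quotient s') := Nat.card_eq_fintype_card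
  have e2 : ks ρ = Fintype.card (Quotient s) := Nat.card_eq_fintype_card
  omega

lemma ks_swap_mul_not {ρ : Perm α} {a b : α} (hab : a ≠ b)
    (h : ¬ ρ.SameCycle a b) : ks ρ = ks (Equiv.swap a b * ρ) + 1 := by
  have h2 := sameCycle_swap_mul_of_not hab h
  have h3 := ks_swap_mul_sameCycle hab h2
  rwa [← mul_assoc, Equiv.swap_mul_self, one_mul] at h3

/-- joint one-step relation -/
def jrRel (σ τ : Perm α) : α → α → Prop := fun u v => σ u = v ∨ τ u = v

lemma ks_one : ks (1 : Perm α) = Fintype.card α := by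
  have e : Quotient (Equiv.Perm.SameCycle.setoid (1 : Perm α)) ≃ α :=
    { toFun := Quotient.lift (id : α → α) (fun a b hab => Equiv.Perm.sameCycle_one.mp hab)
      invFun := Quotient.mk''
      left_inv := by intro q; induction q using Quotient.inductionOn' with | h x => rfl
      right_inv := fun a => rfl }
  rw [ks, Nat.card_congr e, Nat.card_eq_fintype_card]

lemma sameCycle_mul_eqvGen {f g : Perm α} {u v : α} (h : (f * g).SameCycle u v) :
    EqvGen (jrRel f g) u v := by
  refine eqvGen_flatten ?_ ((sameCycle_iff_eqvGen _ _ _).mp h)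
  intro p q hpq
  have : f (g p) = q := hpq
  exact EqvGen.trans _ _ _ (EqvGen.rel _ _ (Or.inr rfl)) (EqvGen.rel _ _ (Or.inl this))

lemma genus_base (τ : Perm α) :
    ks (1 : Perm α) + ks τ + ks (1 * τ) ≤ Fintype.card α + 2 * kq (jrRel 1 τ) := by
  rw [one_mul, ks_one]
  have h1 : kq (jrRel 1 τ) ≤ kq (prRel τ) := by
    apply kq_le
    intro x y hxy
    exact EqvGen.rel _ _ (Or.inr hxy)
  have h2 : kq (prRel τ) ≤ kq (jrRel 1 τ) := by
    apply kq_le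
    intro x y hxy
    rcases hxy with h' | h'
    · have : x = y := h'
      subst this; exact EqvGen.refl x
    · exact EqvGen.rel _ _ h'
  have h3 := ks_eq_kq τ
  omega

lemma genus_ineq : ∀ (N : ℕ) (σ τ : Perm α), σ.support.card ≤ N →
    ks σ + ks τ + ks (σ * τ) ≤ Fintype.card α + 2 * kq (jrRel σ τ) := by
  intro N
  induction N with
  | zero =>
    intro σ τ h0
    have : σ = 1 := by
      rw [← Equiv.Perm.support_eq_empty_iff, ← Finset.card_eq_zero]
      omega
    subst this
    exact genus_base τ
  | succ N IH =>
    intro σ τ hN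
    by_cases hσ : σ = 1
    · subst hσ; exact genus_base τ
    · obtain ⟨x, hx⟩ : ∃ x, σ x ≠ x := by
        by_contra hcon
        push_neg at hcon
        exact hσ (Equiv.ext hcon)
      have hab : x ≠ σ x := fun hc => hx hc.symm
      set σ' := Equiv.swap x (σ x) * σ with hσ'def
      have hks : ks σ' = ks σ + 1 :=
        ks_swap_mul_sameCycle hab ⟨1, by simp⟩
      have hcardlt : σ'.support.card < σ.support.card :=
        Equiv.Perm.card_support_swap_mul hx
      have hIH := IH σ' τ (by omega)
      have hσσ' : σ = Equiv.swap x (σ x) * σ' := by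
        rw [hσ'def, ← mul_assoc, Equiv.swap_mul_self, one_mul]
      have hmul : σ * τ = Equiv.swap x (σ x) * (σ' * τ) := by
        rw [hσ'def, ← mul_assoc, ← mul_assoc, Equiv.swap_mul_self, one_mul]
      have happ : ∀ u, σ u = Equiv.swap x (σ x) (σ' u) := by
        intro u
        conv_lhs => rw [hσσ']
        rfl
      by_cases hc : (σ' * τ).SameCycle x (σ x)
      · -- case B : the swap splits a joint cycle
        have hB : ks (σ * τ) = ks (σ' * τ) + 1 := by
          rw [hmul]; exact ks_swap_mul_sameCycle hab hc
        have hcE : EqvGen (jrRel σ' τ) x (σ x) := sameCycle_mul_eqvGen hc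
        have hK : kq (jrRel σ' τ) ≤ kq (jrRel σ τ) := by
          apply kq_le
          intro u v huv
          rcases huv with h' | h'
          · -- v = σ u
            rcases eq_or_ne (σ' u) x with h1 | h1
            · have hv : v = σ x := by
                rw [← h', happ u, h1, Equiv.swap_apply_left]
              subst hv
              exact EqvGen.trans _ _ _ (EqvGen.rel _ _ (Or.inl h1)) hcE
            rcases eq_or_ne (σ' u) (σ x) with h2 | h2
            · have hv : v = x := by
                rw [← h', happ u, h2, Equiv.swap_apply_right]
              subst hv
              exact EqvGen.trans _ _ _ (EqvGen.rel _ _ (Or.inl h2)) (EqvGen.symm _ _ hcE)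
            · have hv : v = σ' u := by
                rw [← h', happ u, Equiv.swap_apply_of_ne_of_ne h1 h2]
              exact EqvGen.rel _ _ (Or.inl hv.symm)
          · exact EqvGen.rel _ _ (Or.inr h')
        omega
      · -- case A : the swap merges two joint cycles
        have hA : ks (σ' * τ) = ks (σ * τ) + 1 := by
          have := ks_swap_mul_not hab hc
          rwa [← hmul] at this
        have hK1 : kq (jrRel σ' τ) ≤
            kq (fun u v => jrRel σ' τ u v ∨ (u = x ∧ v = σ x)) + 1 :=
          kq_le_merge (jrRel σ' τ) x (σ x)
        have hK2 : kq (fun u v => jrRel σ' τ u v ∨ (u = x ∧ v = σ x)) ≤ kq (jrRel σ τ) := by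
          apply kq_le
          intro u v huv
          have hxσx : EqvGen (fun u v => jrRel σ' τ u v ∨ (u = x ∧ v = σ x)) x (σ x) :=
            EqvGen.rel _ _ (Or.inr ⟨rfl, rfl⟩)
          rcases huv with h' | h'
          · rcases eq_or_ne (σ' u) x with h1 | h1
            · have hv : v = σ x := by
                rw [← h', happ u, h1, Equiv.swap_apply_left]
              subst hv
              exact EqvGen.trans _ _ _ (EqvGen.rel _ _ (Or.inl (Or.inl h1))) hxσx
            rcases eq_or_ne (σ' u) (σ x) with h2 | h2
            · have hv : v = x := by
                rw [← h', happ u, h2, Equiv.swap_apply_right]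
              subst hv
              exact EqvGen.trans _ _ _ (EqvGen.rel _ _ (Or.inl (Or.inl h2)))
                (EqvGen.symm _ _ hxσx)
            · have hv : v = σ' u := by
                rw [← h', happ u, Equiv.swap_apply_of_ne_of_ne h1 h2]
              exact EqvGen.rel _ _ (Or.inl (Or.inl hv.symm))
          · exact EqvGen.rel _ _ (Or.inl (Or.inr h'))
        omega

lemma cycleCount_eq_ks (σ : Perm α) : cycleCount σ = ks σ := by
  classical
  -- the quotient by SameCycle is equivalent to (nontrivial cycles) ⊕ (fixed points)
  have e : Quotient (Equiv.Perm.SameCycle.setoid σ) ≃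
      ({c // c ∈ σ.cycleFactorsFinset} ⊕ {x : α // σ x = x}) := by
    refine
      { toFun := Quotient.lift (fun x => if h : σ x = x then Sum.inr ⟨x, h⟩ else
          Sum.inl ⟨σ.cycleOf x, Equiv.Perm.cycleOf_mem_cycleFactorsFinset_iff.mpr
            (Equiv.Perm.mem_support.mpr h)⟩) ?_
        invFun := Sum.elim
          (fun c => Quotient.mk'' (Equiv.Perm.IsCycle.nonempty_support
            (Equiv.Perm.mem_cycleFactorsFinset_iff.mp c.2).1).choose)
          (fun x => Quotient.mk'' x.1)
        left_inv := ?_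
        right_inv := ?_ }
    · intro x y (hxy : σ.SameCycle x y)
      by_cases hx : σ x = x
      · have : x = y := hxy.eq_of_left hx
        subst this; rfl
      · have hy : ¬ σ y = y := fun hy => hx ((hxy.apply_eq_self_iff).mpr hy)
        beta_reduce
        rw [dif_neg hx, dif_neg hy]
        exact congrArg Sum.inl (Subtype.ext hxy.cycleOf_eq)
    · intro q
      induction q using Quotient.inductionOn' with | h x => ?_
      show Sum.elim _ _ (Quotient.lift _ _ (Quotient.mk'' x)) = _
      by_cases hx : σ x = x
      · simp only [Quotient.lift_mk, dif_pos hx, Sum.elim_inr]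
      · simp only [Quotient.lift_mk, dif_neg hx, Sum.elim_inl]
        apply Quotient.sound'
        have hmem := (Equiv.Perm.IsCycle.nonempty_support
          (Equiv.Perm.mem_cycleFactorsFinset_iff.mp
            (Equiv.Perm.cycleOf_mem_cycleFactorsFinset_iff.mpr
              (Equiv.Perm.mem_support.mpr hx))).1).choose_spec
        have := Equiv.Perm.mem_support_cycleOf_iff.mp hmem
        exact this.1.symm
    · rintro (⟨c, hc⟩ | ⟨x, hx⟩)
      · have hcyc := (Equiv.Perm.mem_cycleFactorsFinset_iff.mp hc).1
        have hchoose := (Equiv.Perm.IsCycle.nonempty_support hcyc).choose_spec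
        set y := (Equiv.Perm.IsCycle.nonempty_support hcyc).choose with hy
        have hyc : c = σ.cycleOf y := Equiv.Perm.cycle_is_cycleOf hchoose hc
        have hysupp : y ∈ σ.support := Equiv.Perm.support_cycleOf_le σ y
          (by rw [← hyc]; exact hchoose)
        have hyne : ¬ σ y = y := Equiv.Perm.mem_support.mp hysupp
        show Quotient.lift _ _ (Quotient.mk'' y) = _
        simp only [Quotient.lift_mk, dif_neg hyne]
        exact congrArg Sum.inl (Subtype.ext hyc.symm)
      · show Quotient.lift _ _ (Quotient.mk'' x) = _
        simp only [Quotient.lift_mk, dif_pos hx]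
  have h1 : ks σ = σ.cycleFactorsFinset.card + Fintype.card {x : α // σ x = x} := by
    rw [ks, Nat.card_congr e, Nat.card_eq_fintype_card, Fintype.card_sum,
      Fintype.card_coe]
  have h2 : Multiset.card σ.cycleType = σ.cycleFactorsFinset.card := by
    rw [Equiv.Perm.cycleType]; simp
  have h3 : Fintype.card {x : α // σ x = x} = Fintype.card α - σ.support.card := by
    have h4 := Finset.card_filter_add_card_filter_not
      (s := (Finset.univ : Finset α)) (p := fun x => σ x = x)
    have h5 : Finset.univ.filter (fun x => ¬ σ x = x) = σ.support := by
      ext x; simp [Equiv.Perm.mem_support]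
    have h6 : Fintype.card {x : α // σ x = x} =
        (Finset.univ.filter (fun x => σ x = x)).card := Fintype.card_subtype _
    rw [h5, Finset.card_univ] at h4
    omega
  rw [cycleCount, h1, h2, h3]

lemma ks_inv (σ : Perm α) : ks σ⁻¹ = ks σ := by
  have h : Equiv.Perm.SameCycle.setoid σ⁻¹ = Equiv.Perm.SameCycle.setoid σ :=
    Setoid.ext fun x y => Equiv.Perm.sameCycle_inv
  unfold ks
  rw [h]

lemma ks_le_card (σ : Perm α) : ks σ ≤ Fintype.card α := by
  have h := Nat.card_le_card_of_surjective
    (Quotient.mk'' : α → Quotient (Equiv.Perm.SameCycle.setoid σ))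
    (by intro q; induction q using Quotient.inductionOn' with | h x => exact ⟨x, rfl⟩)
  exact h.trans_eq Nat.card_eq_fintype_card

end
section
-- γ-specific facts

lemma gammaNN_zpow_apply (n : ℕ) (k : ℤ) (u : Fin n) :
    ((gammaNN n) ^ k) (Sum.inl u) = Sum.inl ((finRotate n ^ k) u) ∧
    ((gammaNN n) ^ k) (Sum.inr u) = Sum.inr ((finRotate n ^ k) u) := by
  have h1 : gammaNN n = Equiv.Perm.sumCongrHom _ _ (finRotate n, finRotate n) := rfl
  have h2 : (gammaNN n) ^ k =
      Equiv.sumCongr (finRotate n ^ k) (finRotate n ^ k) := by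
    rw [h1, ← map_zpow, Prod.pow_def]
    rfl
  rw [h2]
  exact ⟨rfl, rfl⟩

open Fin.NatCast in
lemma finRotate_sameCycle (n : ℕ) (hn : 1 ≤ n) (u v : Fin n) :
    (finRotate n).SameCycle u v := by
  obtain ⟨m, rfl⟩ : ∃ m, n = m + 1 := ⟨n - 1, (Nat.succ_pred_eq_of_pos hn).symm⟩
  have hpow : ∀ (k : ℕ) (w : Fin (m+1)), ((finRotate (m+1)) ^ k) w = w + (k : Fin (m+1)) := by
    intro k
    induction k with
    | zero => intro w; simp
    | succ j ih =>
      intro w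
      rw [pow_succ, Perm.mul_apply, ih (finRotate (m+1) w), finRotate_succ_apply]
      push_cast
      abel
  refine ⟨((v - u).val : ℤ), ?_⟩
  rw [zpow_natCast, hpow, Fin.cast_val_eq_self]
  abel

lemma gammaNN_sameCycle_ll (n : ℕ) (hn : 1 ≤ n) (u v : Fin n) :
    (gammaNN n).SameCycle (Sum.inl u) (Sum.inl v) := by
  obtain ⟨k, hk⟩ := finRotate_sameCycle n hn u v
  exact ⟨k, by rw [(gammaNN_zpow_apply n k u).1, hk]⟩

lemma gammaNN_sameCycle_rr (n : ℕ) (hn : 1 ≤ n) (u v : Fin n) :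
    (gammaNN n).SameCycle (Sum.inr u) (Sum.inr v) := by
  obtain ⟨k, hk⟩ := finRotate_sameCycle n hn u v
  exact ⟨k, by rw [(gammaNN_zpow_apply n k u).2, hk]⟩

lemma gammaNN_not_sameCycle (n : ℕ) (u v : Fin n) :
    ¬ (gammaNN n).SameCycle (Sum.inl u) (Sum.inr v) := by
  rintro ⟨k, hk⟩
  rw [(gammaNN_zpow_apply n k u).1] at hk
  exact Sum.inl_ne_inr hk

lemma ks_gammaNN (n : ℕ) (hn : 1 ≤ n) : ks (gammaNN n) = 2 := by
  classical
  set z : Fin n := ⟨0, hn⟩ with hz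
  have hwd : ∀ x y : Fin n ⊕ Fin n, (Equiv.Perm.SameCycle.setoid (gammaNN n)) x y →
      Sum.isLeft x = Sum.isLeft y := by
    rintro (x | x) (y | y) (hxy : (gammaNN n).SameCycle _ _) <;> try rfl
    · exact absurd hxy (gammaNN_not_sameCycle n x y)
    · exact absurd hxy.symm (gammaNN_not_sameCycle n y x)
  set F : Quotient (Equiv.Perm.SameCycle.setoid (gammaNN n)) → Bool :=
    Quotient.lift Sum.isLeft hwd with hF
  set G : Bool → Quotient (Equiv.Perm.SameCycle.setoid (gammaNN n)) :=
    fun b => if b then Quotient.mk'' (Sum.inl z) else Quotient.mk'' (Sum.inr z) with hG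
  have e : Quotient (Equiv.Perm.SameCycle.setoid (gammaNN n)) ≃ Bool := by
    refine ⟨F, G, ?_, ?_⟩
    · intro q
      induction q using Quotient.inductionOn' with | h x => ?_
      rcases x with u | u
      · have h1 : F (Quotient.mk'' (Sum.inl u)) = true := rfl
        rw [h1]
        show Quotient.mk'' (Sum.inl z) = Quotient.mk'' (Sum.inl u)
        exact Quotient.sound' (gammaNN_sameCycle_ll n hn z u)
      · have h1 : F (Quotient.mk'' (Sum.inr u)) = false := rfl
        rw [h1]
        show Quotient.mk'' (Sum.inr z) = Quotient.mk'' (Sum.inr u)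
        exact Quotient.sound' (gammaNN_sameCycle_rr n hn z u)
    · intro b
      rcases b with _ | _ <;> rfl
  rw [ks, Nat.card_congr e, Nat.card_eq_fintype_card, Fintype.card_bool]
end

theorem connected_perm_length_bound (n : ℕ) (hn : 1 ≤ n)
    (β : Equiv.Perm (Fin n ⊕ Fin n)) (hβ : IsConnectedPerm β) :
    2 * n ≤ permLen ((gammaNN n)⁻¹ * β) + permLen β := by
  classical
  set γ := gammaNN n with hγdef
  set τ := β⁻¹ * γ with hτ
  have hβτ : β * τ = γ := by rw [hτ, mul_inv_cancel_left]
  have hm : Fintype.card (Fin n ⊕ Fin n) = 2 * n := by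
    rw [Fintype.card_sum, Fintype.card_fin]; ring
  have hg := genus_ineq (β.support.card) β τ le_rfl
  rw [hβτ] at hg
  have hkγ : ks γ = 2 := ks_gammaNN n hn
  -- joint transitivity
  have hsub : ∀ u v : Fin n ⊕ Fin n, EqvGen (jrRel β τ) u v := by
    obtain ⟨a, b, hab⟩ := hβ
    have hβE : ∀ p q, β.SameCycle p q → EqvGen (jrRel β τ) p q := fun p q h =>
      eqvGen_flatten (fun p q hpq => EqvGen.rel _ _ (Or.inl hpq))
        ((sameCycle_iff_eqvGen β p q).mp h)
    have hγE : ∀ p q, γ.SameCycle p q → EqvGen (jrRel β τ) p q := fun p q h =>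
      sameCycle_mul_eqvGen (by rwa [hβτ])
    have hlr : EqvGen (jrRel β τ) (Sum.inl a) (Sum.inr b) := hβE _ _ hab
    rintro (u | u) (v | v)
    · exact hγE _ _ (gammaNN_sameCycle_ll n hn u v)
    · exact EqvGen.trans _ _ _ (hγE _ _ (gammaNN_sameCycle_ll n hn u a))
        (EqvGen.trans _ _ _ hlr (hγE _ _ (gammaNN_sameCycle_rr n hn b v)))
    · refine EqvGen.symm _ _ ?_
      exact EqvGen.trans _ _ _ (hγE _ _ (gammaNN_sameCycle_ll n hn v a))
        (EqvGen.trans _ _ _ hlr (hγE _ _ (gammaNN_sameCycle_rr n hn b u)))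
    · exact hγE _ _ (gammaNN_sameCycle_rr n hn u v)
  have hkj : kq (jrRel β τ) = 1 := by
    rw [kq]
    rw [Nat.card_eq_one_iff_unique]
    constructor
    · constructor
      intro q1 q2
      induction q1 using Quotient.inductionOn' with | h x => ?_
      induction q2 using Quotient.inductionOn' with | h y => ?_
      exact Quotient.sound' (hsub x y)
    · exact ⟨Quotient.mk'' (Sum.inl ⟨0, hn⟩)⟩
  have hb1 : cycleCount β = ks β := cycleCount_eq_ks β
  have hτinv : (γ⁻¹ * β)⁻¹ = τ := by rw [hτ, mul_inv_rev, inv_inv]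
  have hb2 : cycleCount (γ⁻¹ * β) = ks τ := by
    rw [cycleCount_eq_ks, ← ks_inv (γ⁻¹ * β), hτinv]
  have hle1 : ks β ≤ 2 * n := (ks_le_card β).trans_eq hm
  have hle2 : ks τ ≤ 2 * n := (ks_le_card τ).trans_eq hm
  simp only [permLen, hm, hb1, hb2]
  omega
end

section
/- Let n ≥ 1 and let α, β be permutations of {1,…,2n}. Assume |γ_{n,n}⁻¹β| + |β| = 2n − 2, |γ_{n,n}⁻¹α| + |βα⁻¹| = |γ_{n,n}⁻¹β|, and |α| + |βα⁻¹| = |β|. Then α = β. -/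
open Equiv Equiv.Perm

section PermLenFacts

variable {β : Type*} [Fintype β] [DecidableEq β]

private lemma two_mul_card_cycleType_le (σ : Perm β) :
    2 * Multiset.card σ.cycleType ≤ σ.support.card := by
  rw [← σ.sum_cycleType]
  calc 2 * Multiset.card σ.cycleType = Multiset.card σ.cycleType • 2 := by
        rw [smul_eq_mul, mul_comm]
    _ ≤ σ.cycleType.sum := Multiset.card_nsmul_le_sum fun x hx => σ.two_le_of_mem_cycleType hx

private lemma permLen_eq (σ : Perm β) :
    permLen σ = σ.support.card - Multiset.card σ.cycleType := by
  have h1 := two_mul_card_cycleType_le σ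
  have h2 : σ.support.card ≤ Fintype.card β := σ.support.card_le_univ
  unfold permLen cycleCount
  omega

private lemma permLen_eq_zero {σ : Perm β} (h : permLen σ = 0) : σ = 1 := by
  have h1 := two_mul_card_cycleType_le σ
  have h2 : σ.support.card ≤ Fintype.card β := σ.support.card_le_univ
  unfold permLen cycleCount at h
  have : Multiset.card σ.cycleType = 0 := by omega
  exact card_cycleType_eq_zero.mp this

private lemma permLen_one : permLen (1 : Perm β) = 0 := by
  rw [permLen_eq]; simp

private lemma permLen_inv (σ : Perm β) : permLen σ⁻¹ = permLen σ := by
  rw [permLen_eq, permLen_eq, cycleType_inv, support_inv]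

private lemma permLen_mul_disjoint {σ τ : Perm β} (h : Disjoint σ τ) :
    permLen (σ * τ) = permLen σ + permLen τ := by
  have hct := h.cycleType_mul
  have hsum : (σ * τ).support.card = σ.support.card + τ.support.card := by
    rw [← sum_cycleType, hct, Multiset.sum_add, sum_cycleType, sum_cycleType]
  have h1 := two_mul_card_cycleType_le σ
  have h2 := two_mul_card_cycleType_le τ
  rw [permLen_eq, permLen_eq, permLen_eq, hct, Multiset.card_add, hsum]
  omega

private lemma isCycle_swaps : ∀ (k : ℕ) (f : Perm β), f.support.card ≤ k → f.IsCycle →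
    ∃ l : List (Perm β), (∀ t ∈ l, t.IsSwap) ∧ l.prod = f ∧ l.length + 1 = f.support.card := by
  intro k
  induction k with
  | zero =>
    intro f hk hf
    have := hf.two_le_card_support
    omega
  | succ k ih =>
    intro f hk hf
    obtain ⟨x, hx, -⟩ := id hf
    by_cases h1 : f (f x) = x
    · refine ⟨[Equiv.swap x (f x)], ?_, ?_, ?_⟩
      · intro t ht
        rw [List.mem_singleton] at ht
        exact ht ▸ ⟨x, f x, Ne.symm hx, rfl⟩
      · rw [List.prod_singleton, ← hf.eq_swap_of_apply_apply_eq_self hx h1]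
      · have h2 : f.support.card = 2 := by
          rw [hf.eq_swap_of_apply_apply_eq_self hx h1]
          exact card_support_swap (Ne.symm hx)
        simp [h2]
    · set g := Equiv.swap x (f x) * f with hg
      have hgc : g.IsCycle := hf.swap_mul hx h1
      have hsupp : g.support = f.support \ {x} := support_swap_mul_eq f x h1
      have hxmem : x ∈ f.support := mem_support.2 hx
      have hcard : g.support.card + 1 = f.support.card := by
        rw [hsupp, Finset.sdiff_singleton_eq_erase, Finset.card_erase_of_mem hxmem]
        have : 1 ≤ f.support.card := Finset.card_pos.mpr ⟨x, hxmem⟩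
        omega
      obtain ⟨l, hl1, hl2, hl3⟩ := ih g (by omega) hgc
      refine ⟨Equiv.swap x (f x) :: l, ?_, ?_, ?_⟩
      · intro t ht
        rcases List.mem_cons.1 ht with rfl | ht
        · exact ⟨x, f x, Ne.symm hx, rfl⟩
        · exact hl1 t ht
      · rw [List.prod_cons, hl2, hg, ← mul_assoc, swap_mul_self, one_mul]
      · rw [List.length_cons]
        omega

private lemma exists_swaps (σ : Perm β) :
    ∃ l : List (Perm β), (∀ t ∈ l, t.IsSwap) ∧ l.prod = σ ∧ l.length = permLen σ := by
  induction σ using cycle_induction_on with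
  | base_one => exact ⟨[], by simp, by simp, by simp [permLen_one]⟩
  | base_cycles f hf =>
    obtain ⟨l, hl1, hl2, hl3⟩ := isCycle_swaps f.support.card f le_rfl hf
    refine ⟨l, hl1, hl2, ?_⟩
    have hct : Multiset.card f.cycleType = 1 := card_cycleType_eq_one.mpr hf
    rw [permLen_eq, hct]
    omega
  | induction_disjoint σ τ hd hc hσ hτ =>
    obtain ⟨l1, h11, h12, h13⟩ := hσ
    obtain ⟨l2, h21, h22, h23⟩ := hτ
    refine ⟨l1 ++ l2, ?_, ?_, ?_⟩
    · intro t ht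
      rcases List.mem_append.1 ht with ht | ht
      · exact h11 t ht
      · exact h21 t ht
    · rw [List.prod_append, h12, h22]
    · rw [List.length_append, h13, h23, permLen_mul_disjoint hd]

end PermLenFacts

section Rank

variable {β : Type*} [Fintype β] [DecidableEq β]

/-- The linear map `f ↦ f ∘ σ - f` on `β → ℚ`. -/
noncomputable def Dmap (σ : Perm β) : (β → ℚ) →ₗ[ℚ] (β → ℚ) :=
  LinearMap.funLeft ℚ ℚ ⇑σ - LinearMap.id

private lemma Dmap_apply (σ : Perm β) (g : β → ℚ) (i : β) :
    Dmap σ g i = g (σ i) - g i := rfl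

/-- The rank of `Dmap σ`. -/
noncomputable def rk (σ : Perm β) : ℕ :=
  Module.finrank ℚ (LinearMap.range (Dmap σ))

private lemma rk_one : rk (1 : Perm β) = 0 := by
  have : Dmap (1 : Perm β) = 0 := by
    refine LinearMap.ext fun g => funext fun i => ?_
    simp [Dmap_apply]
  rw [rk, this, LinearMap.range_zero, finrank_bot]

private lemma rk_mul_le (σ τ : Perm β) : rk (σ * τ) ≤ rk σ + rk τ := by
  have hD : Dmap (σ * τ) = (LinearMap.funLeft ℚ ℚ ⇑τ).comp (Dmap σ) + Dmap τ := by
    refine LinearMap.ext fun g => funext fun i => ?_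
    simp only [LinearMap.add_apply, Pi.add_apply, LinearMap.comp_apply, Dmap_apply,
      LinearMap.funLeft_apply, Perm.mul_apply]
    ring
  have hle : LinearMap.range (Dmap (σ * τ)) ≤
      LinearMap.range ((LinearMap.funLeft ℚ ℚ ⇑τ).comp (Dmap σ)) ⊔ LinearMap.range (Dmap τ) := by
    rw [hD]
    rintro _ ⟨g, rfl⟩
    exact Submodule.add_mem_sup (LinearMap.mem_range_self _ g) (LinearMap.mem_range_self _ g)
  calc rk (σ * τ) ≤ Module.finrank ℚ
        (LinearMap.range ((LinearMap.funLeft ℚ ℚ ⇑τ).comp (Dmap σ)) ⊔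
          LinearMap.range (Dmap τ) : Submodule ℚ (β → ℚ)) :=
        Submodule.finrank_mono hle
    _ ≤ Module.finrank ℚ (LinearMap.range ((LinearMap.funLeft ℚ ℚ ⇑τ).comp (Dmap σ))) +
          Module.finrank ℚ (LinearMap.range (Dmap τ)) :=
        Submodule.finrank_add_le_finrank_add_finrank _ _
    _ ≤ rk σ + rk τ := by
        rw [LinearMap.range_comp]
        exact Nat.add_le_add_right (Submodule.finrank_map_le _ _) _

private lemma rk_swap_le {t : Perm β} (h : t.IsSwap) : rk t ≤ 1 := by
  obtain ⟨x, y, hxy, rfl⟩ := h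
  set v : β → ℚ := Pi.single x (1 : ℚ) - Pi.single y 1 with hv
  have hle : LinearMap.range (Dmap (Equiv.swap x y)) ≤ ℚ ∙ v := by
    rintro _ ⟨g, rfl⟩
    rw [Submodule.mem_span_singleton]
    refine ⟨g y - g x, ?_⟩
    ext i
    simp only [hv, Pi.smul_apply, Pi.sub_apply, Dmap_apply, Equiv.swap_apply_def,
      Pi.single_apply, smul_eq_mul]
    split_ifs <;> try simp_all
    all_goals try ring
  refine le_trans (Submodule.finrank_mono hle) ?_
  by_cases hv0 : v = 0
  · rw [hv0, Submodule.span_zero_singleton]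
    simp
  · rw [finrank_span_singleton hv0]

private lemma rk_le_permLen (σ : Perm β) : rk σ ≤ permLen σ := by
  obtain ⟨l, hl1, hl2, hl3⟩ := exists_swaps σ
  rw [← hl3, ← hl2]
  clear hl2 hl3
  induction l with
  | nil => simp [rk_one]
  | cons t l ih =>
    rw [List.prod_cons, List.length_cons]
    have h1 : rk (t * l.prod) ≤ rk t + rk l.prod := rk_mul_le _ _
    have h2 : rk t ≤ 1 := rk_swap_le (hl1 t List.mem_cons_self)
    have h3 : rk l.prod ≤ l.length := ih fun s hs => hl1 s (List.mem_cons_of_mem _ hs)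
    omega

private lemma ker_Dmap_inv (σ : Perm β) :
    LinearMap.ker (Dmap σ⁻¹) = LinearMap.ker (Dmap σ) := by
  ext g
  simp only [LinearMap.mem_ker]
  constructor <;> intro h <;> ext i
  · have := congrFun h (σ i)
    simp only [Dmap_apply, Perm.coe_inv, Equiv.symm_apply_apply, Pi.zero_apply, sub_eq_zero] at this
    simp only [Dmap_apply, Pi.zero_apply, sub_eq_zero]
    exact this.symm
  · have := congrFun h (σ⁻¹ i)
    simp only [Dmap_apply, Perm.coe_inv, Equiv.apply_symm_apply, Pi.zero_apply, sub_eq_zero] at this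
    simp only [Dmap_apply, Pi.zero_apply, sub_eq_zero]
    exact this.symm

private lemma rk_add_ker (σ : Perm β) :
    rk σ + Module.finrank ℚ (LinearMap.ker (Dmap σ)) = Fintype.card β := by
  have := LinearMap.finrank_range_add_finrank_ker (Dmap σ)
  rwa [Module.finrank_pi ℚ] at this

end Rank

section Gamma

private lemma gamma_ker_le (n : ℕ) (hn : 1 ≤ n) :
    Module.finrank ℚ (LinearMap.ker (Dmap (gammaNN n))) ≤ 2 := by
  obtain ⟨m, rfl⟩ : ∃ m, n = m + 1 := ⟨n - 1, by omega⟩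
  set z : Fin (m + 1) := ⟨0, by omega⟩ with hz
  set K := LinearMap.ker (Dmap (gammaNN (m + 1))) with hK
  have hfix : ∀ g ∈ K, ∀ x, g (gammaNN (m + 1) x) = g x := by
    intro g hg x
    have := congrFun (LinearMap.mem_ker.mp hg) x
    simpa [Dmap_apply, sub_eq_zero] using this
  have hrot : ∀ (k : ℕ) (hk : k + 1 < m + 1),
      finRotate (m + 1) ⟨k, by omega⟩ = ⟨k + 1, hk⟩ := by
    intro k hk
    rw [finRotate_succ_apply]
    ext
    simp [Fin.add_def, Nat.mod_eq_of_lt hk]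
  have hconstl : ∀ g ∈ K, ∀ a : Fin (m + 1), g (Sum.inl a) = g (Sum.inl z) := by
    intro g hg a
    obtain ⟨k, hk⟩ := a
    induction k with
    | zero => rfl
    | succ k ih =>
      have hk' : k < m + 1 := by omega
      calc g (Sum.inl ⟨k + 1, hk⟩) = g (Sum.inl (finRotate (m + 1) ⟨k, hk'⟩)) := by
            rw [hrot k hk]
        _ = g (gammaNN (m + 1) (Sum.inl ⟨k, hk'⟩)) := by simp [gammaNN]
        _ = g (Sum.inl ⟨k, hk'⟩) := hfix g hg _
        _ = g (Sum.inl z) := ih hk'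
  have hconstr : ∀ g ∈ K, ∀ a : Fin (m + 1), g (Sum.inr a) = g (Sum.inr z) := by
    intro g hg a
    obtain ⟨k, hk⟩ := a
    induction k with
    | zero => rfl
    | succ k ih =>
      have hk' : k < m + 1 := by omega
      calc g (Sum.inr ⟨k + 1, hk⟩) = g (Sum.inr (finRotate (m + 1) ⟨k, hk'⟩)) := by
            rw [hrot k hk]
        _ = g (gammaNN (m + 1) (Sum.inr ⟨k, hk'⟩)) := by simp [gammaNN]
        _ = g (Sum.inr ⟨k, hk'⟩) := hfix g hg _
        _ = g (Sum.inr z) := ih hk'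
  set E : ((Fin (m + 1) ⊕ Fin (m + 1)) → ℚ) →ₗ[ℚ] ℚ × ℚ :=
    LinearMap.prod (LinearMap.proj (Sum.inl z)) (LinearMap.proj (Sum.inr z)) with hE
  have hinj : Function.Injective (E.domRestrict K) := by
    rw [← LinearMap.ker_eq_bot]
    rw [Submodule.eq_bot_iff]
    rintro ⟨g, hg⟩ hgker
    have h0 : g (Sum.inl z) = 0 ∧ g (Sum.inr z) = 0 := by
      have := LinearMap.mem_ker.mp hgker
      have h := Prod.mk.injEq .. ▸ this
      constructor
      · exact congrArg Prod.fst this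
      · exact congrArg Prod.snd this
    refine Subtype.ext ?_
    funext x
    cases x with
    | inl a => simp [hconstl g hg a, h0.1]
    | inr a => simp [hconstr g hg a, h0.2]
  have := LinearMap.finrank_le_finrank_of_injective hinj
  simpa using this

end Gamma

/-- If `β` lies on a geodesic from the identity to `γ_{n,n}` and `α` lies between
the identity and `β` as well as between `β` and `γ_{n,n}` (in the sense of the three
stated length equalities), then `α = β`. -/
theorem geodesic_squeeze (n : ℕ) (hn : 1 ≤ n)
    (α β : Equiv.Perm (Fin n ⊕ Fin n))
    (h1 : permLen ((gammaNN n)⁻¹ * β) + permLen β = 2 * n - 2)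
    (h2 : permLen ((gammaNN n)⁻¹ * α) + permLen (β * α⁻¹) = permLen ((gammaNN n)⁻¹ * β))
    (h3 : permLen α + permLen (β * α⁻¹) = permLen β) :
    α = β := by
  have hcard : Fintype.card (Fin n ⊕ Fin n) = 2 * n := by
    simp [Fintype.card_sum, two_mul]
  have hrkγ : 2 * n - 2 ≤ rk (gammaNN n)⁻¹ := by
    have h := rk_add_ker (gammaNN n)⁻¹
    rw [ker_Dmap_inv, hcard] at h
    have h2 := gamma_ker_le n hn
    omega
  have htri := rk_mul_le ((gammaNN n)⁻¹ * α) α⁻¹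
  rw [mul_inv_cancel_right] at htri
  have hlow : 2 * n - 2 ≤ permLen ((gammaNN n)⁻¹ * α) + permLen α := by
    have t1 := rk_le_permLen ((gammaNN n)⁻¹ * α)
    have t2 := rk_le_permLen α⁻¹
    have t3 := permLen_inv α
    omega
  have hC : permLen (β * α⁻¹) = 0 := by omega
  have hba : β * α⁻¹ = 1 := permLen_eq_zero hC
  exact (mul_inv_eq_one.mp hba).symm
end

section
/- Fix integers k ≥ 1, n ≥ 1, nonnegative integers s₁,…,s_k, t₁,…,t_k and nonnegative integers e_{i,j} = e_{j,i} for i ≠ j in {1,…,k}, such that s_i + t_i > 0 and Σ_{j≠i} e_{i,j} > 0 for every i. Let β₁,…,β_k be permutations of {1,…,2n} such that at least one β_i is connected. Then for every flow f in the associated flow network, F_{n,n}(β) ≥ |f|·(2n − 2) + 2; equivalently, X(2n−2) − F_{n,n}(β) ≤ −2 where X is the maximum value of a flow. -/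
/-- `F_{n,n}(α,β) = Σᵢ (sᵢ|γ_{n,n}⁻¹αᵢ| + tᵢ|αᵢ|) + Σ_{i<j} e_{i,j}|βᵢ⁻¹βⱼ| + Σᵢ dᵢ|βᵢαᵢ⁻¹|`. -/
noncomputable def FnnPair (n k : ℕ) (s t d : Fin k → ℕ) (e : Fin k → Fin k → ℕ)
    (A B : Fin k → Equiv.Perm (Fin n ⊕ Fin n)) : ℕ :=
  (∑ i, (s i * permLen ((gammaNN n)⁻¹ * A i) + t i * permLen (A i)))
    + (∑ i, ∑ j, if i < j then e i j * permLen ((B i)⁻¹ * B j) else 0)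
    + (∑ i, d i * permLen (B i * (A i)⁻¹))

/-- `F_{n,n}(β) = Σᵢ (sᵢ|γ_{n,n}⁻¹βᵢ| + tᵢ|βᵢ|) + Σ_{i<j} e_{i,j}|βᵢ⁻¹βⱼ|`. -/
noncomputable def FnnOne (n k : ℕ) (s t : Fin k → ℕ) (e : Fin k → Fin k → ℕ)
    (B : Fin k → Equiv.Perm (Fin n ⊕ Fin n)) : ℕ :=
  (∑ i, (s i * permLen ((gammaNN n)⁻¹ * B i) + t i * permLen (B i)))
    + (∑ i, ∑ j, if i < j then e i j * permLen ((B i)⁻¹ * B j) else 0)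

/-- Vertices of the flow network: `Sum.inl i` are the inner vertices `1,…,k`,
`Sum.inr true` is the source and `Sum.inr false` is the sink. -/
abbrev NetVertex (k : ℕ) := Fin k ⊕ Bool

/-- The source of the flow network. -/
def netSrc (k : ℕ) : NetVertex k := Sum.inr true

/-- The sink of the flow network. -/
def netSnk (k : ℕ) : NetVertex k := Sum.inr false

/-- Capacities: `c(src,i) = sᵢ`, `c(i,snk) = tᵢ`, `c(i,j) = e_{i,j}` for `i ≠ j`,
and `0` on all other ordered pairs. -/
def netCap {k : ℕ} (s t : Fin k → ℕ) (e : Fin k → Fin k → ℕ) :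
    NetVertex k → NetVertex k → ℤ
  | Sum.inr true, Sum.inl i => s i
  | Sum.inl i, Sum.inr false => t i
  | Sum.inl i, Sum.inl j => if i = j then 0 else e i j
  | _, _ => 0

/-- A flow with respect to capacities `c`: bounded by capacities, skew-symmetric,
and conserved at every vertex other than the source and the sink. -/
def IsFlow {k : ℕ} (c f : NetVertex k → NetVertex k → ℤ) : Prop :=
  (∀ u v, f u v ≤ c u v) ∧ (∀ u v, f u v = - f v u) ∧
    (∀ u, u ≠ netSrc k → u ≠ netSnk k → ∑ v, f v u = 0)

/-- The value `|f| = Σᵤ f(src, u)` of a flow. -/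
def flowValue {k : ℕ} (f : NetVertex k → NetVertex k → ℤ) : ℤ :=
  ∑ u, f (netSrc k) u

namespace Aux
open Equiv Equiv.Perm Finset

variable {α : Type*} [Fintype α] [DecidableEq α]

theorem two_mul_card_cycleType_le (σ : Perm α) :
    2 * Multiset.card σ.cycleType ≤ σ.support.card := by
  have h := Multiset.card_nsmul_le_sum (s := σ.cycleType) (a := 2)
    (fun x hx => Equiv.Perm.two_le_of_mem_cycleType hx)
  rw [Equiv.Perm.sum_cycleType] at h
  simpa [mul_comm] using h

theorem cycleCount_le_card (σ : Perm α) : cycleCount σ ≤ Fintype.card α := by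
  have h1 := two_mul_card_cycleType_le σ
  have h2 : σ.support.card ≤ Fintype.card α := Finset.card_le_univ _
  unfold cycleCount; omega

theorem permLen_add_cycleCount (σ : Perm α) :
    permLen σ + cycleCount σ = Fintype.card α := by
  have := cycleCount_le_card σ
  unfold permLen; omega

theorem cycleCount_one : cycleCount (1 : Perm α) = Fintype.card α := by
  unfold cycleCount
  simp [Equiv.Perm.cycleType_one]

theorem permLen_one : permLen (1 : Perm α) = 0 := by
  unfold permLen
  rw [cycleCount_one]; omega

theorem permLen_eq_zero_iff {σ : Perm α} : permLen σ = 0 ↔ σ = 1 := by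
  constructor
  · intro h
    have h1 := two_mul_card_cycleType_le σ
    have h2 : σ.support.card ≤ Fintype.card α := Finset.card_le_univ _
    have h3 : cycleCount σ = Fintype.card α := by
      have := permLen_add_cycleCount σ; omega
    have h4 : Multiset.card σ.cycleType = σ.support.card := by
      unfold cycleCount at h3; omega
    have h5 : σ.support.card = 0 := by omega
    exact Equiv.Perm.card_support_eq_zero.mp h5
  · intro h; subst h; exact permLen_one

theorem one_le_permLen {σ : Perm α} (h : σ ≠ 1) : 1 ≤ permLen σ := by
  rcases Nat.eq_zero_or_pos (permLen σ) with h0 | h0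
  · exact absurd (permLen_eq_zero_iff.mp h0) h
  · omega

theorem cycleCount_inv (σ : Perm α) : cycleCount σ⁻¹ = cycleCount σ := by
  unfold cycleCount
  rw [Equiv.Perm.cycleType_inv, Equiv.Perm.support_inv]

theorem permLen_inv (σ : Perm α) : permLen σ⁻¹ = permLen σ := by
  unfold permLen; rw [cycleCount_inv]

end Aux


set_option linter.unusedSectionVars false
namespace Aux2
open Equiv Equiv.Perm Finset

variable {α : Type*} [Fintype α] [DecidableEq α]

theorem pow_agree {f g : Perm α} {x : α} {m : ℕ}
    (h : ∀ j, j < m → g ((f ^ j) x) = (f ^ (j + 1)) x) :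
    ∀ j, j ≤ m → (g ^ j) x = (f ^ j) x := by
  intro j hj
  induction j with
  | zero => simp
  | succ j ih =>
    have h1 : (g ^ (j + 1)) x = g ((g ^ j) x) := by
      rw [pow_succ', Perm.mul_apply]
    rw [h1, ih (by omega), h j (by omega)]

theorem exists_pow_lt_eq (g : Perm α) (x : α) {k : ℕ} (hk : 0 < k) (h : (g ^ k) x = x)
    (i : ℕ) : ∃ j, j < k ∧ (g ^ i) x = (g ^ j) x := by
  have hper : Function.IsPeriodicPt (⇑g) k x := by
    rw [Function.IsPeriodicPt, Function.IsFixedPt, ← Equiv.Perm.coe_pow]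
    exact h
  have hp : 0 < Function.minimalPeriod (⇑g) x := hper.minimalPeriod_pos hk
  have hple : Function.minimalPeriod (⇑g) x ≤ k := hper.minimalPeriod_le hk
  refine ⟨i % Function.minimalPeriod (⇑g) x, lt_of_lt_of_le (Nat.mod_lt _ hp) hple, ?_⟩
  rw [Equiv.Perm.coe_pow, Equiv.Perm.coe_pow]
  exact (Function.iterate_mod_minimalPeriod_eq).symm

theorem step_eq {σ : Perm α} {x : α} (j : ℕ) : σ ((σ ^ j) x) = (σ ^ (j + 1)) x := by
  rw [pow_succ', Perm.mul_apply]

theorem not_sameCycle_swap_mul {σ : Perm α} {x y : α} (hxy : x ≠ y)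
    (h : σ.SameCycle x y) : ¬(Equiv.swap x y * σ).SameCycle x y := by
  classical
  obtain ⟨i0, hi0pos, _, hi0⟩ := h.exists_pow_eq σ
  have hex : ∃ i, 0 < i ∧ (σ ^ i) x = y := ⟨i0, hi0pos, hi0⟩
  set k := Nat.find hex with hkdef
  obtain ⟨hkpos, hky⟩ : 0 < k ∧ (σ ^ k) x = y := Nat.find_spec hex
  have hmin : ∀ j, j < k → ¬(0 < j ∧ (σ ^ j) x = y) := fun j hj => Nat.find_min hex hj
  have hagree : ∀ j, j ≤ k - 1 → ((Equiv.swap x y * σ) ^ j) x = (σ ^ j) x := by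
    apply pow_agree
    intro j hj
    have h1 : (σ ^ (j + 1)) x ≠ y := fun hc => hmin (j + 1) (by omega) ⟨by omega, hc⟩
    have h2 : (σ ^ (j + 1)) x ≠ x := by
      intro hc
      obtain ⟨j', hj', hj'e⟩ := exists_pow_lt_eq σ x (Nat.succ_pos j) hc k
      have hj'k : j' < k := by omega
      rw [hky] at hj'e
      rcases Nat.eq_zero_or_pos j' with h0 | h0
      · subst h0; simp at hj'e; exact hxy hj'e.symm
      · exact hmin j' hj'k ⟨h0, hj'e.symm⟩
    rw [Perm.mul_apply, step_eq, Equiv.swap_apply_of_ne_of_ne h2 h1]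
  have hk1 : ((Equiv.swap x y * σ) ^ k) x = x := by
    have e1 : ((Equiv.swap x y * σ) ^ (k - 1)) x = (σ ^ (k - 1)) x := hagree _ le_rfl
    have e3 : k - 1 + 1 = k := by omega
    have e2 : ((Equiv.swap x y * σ) ^ k) x
        = (Equiv.swap x y * σ) (((Equiv.swap x y * σ) ^ (k - 1)) x) := by
      conv_lhs => rw [← e3]
      exact (step_eq _).symm
    rw [e2, e1, Perm.mul_apply, step_eq, e3, hky, Equiv.swap_apply_right]
  intro hSC
  obtain ⟨i, hipos, _, hieq⟩ := hSC.exists_pow_eq _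
  obtain ⟨j, hjk, hje⟩ := exists_pow_lt_eq (Equiv.swap x y * σ) x hkpos hk1 i
  rw [hje] at hieq
  rcases Nat.eq_zero_or_pos j with h0 | h0
  · subst h0; simp at hieq; exact hxy hieq
  · rw [hagree j (by omega)] at hieq
    exact hmin j hjk ⟨h0, hieq⟩

theorem sameCycle_swap_mul {σ : Perm α} {x y : α} (h : ¬σ.SameCycle x y) :
    (Equiv.swap x y * σ).SameCycle x y := by
  have hper : Function.IsPeriodicPt (⇑σ) (orderOf σ) y := by
    rw [Function.IsPeriodicPt, Function.IsFixedPt, ← Equiv.Perm.coe_pow,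
      pow_orderOf_eq_one]; rfl
  have hKpos : 0 < Function.minimalPeriod (⇑σ) y := hper.minimalPeriod_pos (orderOf_pos σ)
  set K := Function.minimalPeriod (⇑σ) y with hKdef
  have hKy : (σ ^ K) y = y := by
    rw [Equiv.Perm.coe_pow]; exact Function.iterate_minimalPeriod
  have hxne : ∀ jj : ℕ, (σ ^ jj) y ≠ x := by
    intro jj hc
    exact h (Equiv.Perm.SameCycle.symm ⟨(jj : ℤ), by rw [zpow_natCast]; exact hc⟩)
  have hagree : ∀ j, j ≤ K - 1 → ((Equiv.swap x y * σ) ^ j) y = (σ ^ j) y := by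
    apply pow_agree
    intro j hj
    have h2 : (σ ^ (j + 1)) y ≠ y := by
      intro hc
      have : Function.IsPeriodicPt (⇑σ) (j + 1) y := by
        rw [Function.IsPeriodicPt, Function.IsFixedPt, ← Equiv.Perm.coe_pow]; exact hc
      have := this.minimalPeriod_le (Nat.succ_pos j)
      omega
    rw [Perm.mul_apply, step_eq, Equiv.swap_apply_of_ne_of_ne (hxne (j + 1)) h2]
  have hfin : ((Equiv.swap x y * σ) ^ K) y = x := by
    have e3 : K - 1 + 1 = K := by omega
    have e2 : ((Equiv.swap x y * σ) ^ K) y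
        = (Equiv.swap x y * σ) (((Equiv.swap x y * σ) ^ (K - 1)) y) := by
      conv_lhs => rw [← e3]
      exact (step_eq _).symm
    rw [e2, hagree _ le_rfl, Perm.mul_apply, step_eq, e3, hKy, Equiv.swap_apply_right]
  exact Equiv.Perm.SameCycle.symm ⟨(K : ℤ), by rw [zpow_natCast]; exact hfin⟩

end Aux2

set_option linter.unusedSectionVars false
namespace Aux3
open Equiv Equiv.Perm Finset

variable {α : Type*} [Fintype α] [DecidableEq α]

theorem step_eq {σ : Perm α} {x : α} (j : ℕ) : σ ((σ ^ j) x) = (σ ^ (j + 1)) x := by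
  rw [pow_succ', Perm.mul_apply]

theorem pow_agree {f g : Perm α} {x : α} {m : ℕ}
    (h : ∀ j, j < m → g ((f ^ j) x) = (f ^ (j + 1)) x) :
    ∀ j, j ≤ m → (g ^ j) x = (f ^ j) x := by
  intro j hj
  induction j with
  | zero => simp
  | succ j ih =>
    have h1 : (g ^ (j + 1)) x = g ((g ^ j) x) := by
      rw [pow_succ', Perm.mul_apply]
    rw [h1, ih (by omega), h j (by omega)]

theorem minPeriod_pos (g : Perm α) (x : α) : 0 < Function.minimalPeriod (⇑g) x := by
  have hper : Function.IsPeriodicPt (⇑g) (orderOf g) x := by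
    rw [Function.IsPeriodicPt, Function.IsFixedPt, ← Equiv.Perm.coe_pow,
      pow_orderOf_eq_one]; rfl
  exact hper.minimalPeriod_pos (orderOf_pos g)

theorem pow_minPeriod_eq (g : Perm α) (x : α) :
    (g ^ Function.minimalPeriod (⇑g) x) x = x := by
  rw [Equiv.Perm.coe_pow]; exact Function.iterate_minimalPeriod

theorem pow_ne_self_of_lt_minPeriod (g : Perm α) (x : α) {j : ℕ} (hj : 0 < j)
    (hlt : j < Function.minimalPeriod (⇑g) x) : (g ^ j) x ≠ x := by
  intro hc
  have : Function.IsPeriodicPt (⇑g) j x := by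
    rw [Function.IsPeriodicPt, Function.IsFixedPt, ← Equiv.Perm.coe_pow]; exact hc
  have := this.minimalPeriod_le hj
  omega

theorem exists_pow_lt_period_eq (g : Perm α) (x : α) (i : ℕ) :
    ∃ j, j < Function.minimalPeriod (⇑g) x ∧ (g ^ i) x = (g ^ j) x := by
  refine ⟨i % Function.minimalPeriod (⇑g) x, Nat.mod_lt _ (minPeriod_pos g x), ?_⟩
  rw [Equiv.Perm.coe_pow, Equiv.Perm.coe_pow]
  exact (Function.iterate_mod_minimalPeriod_eq).symm

/-- Stitching a new point into a cycle. -/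
theorem stitch1 {c : Perm α} {x y : α} (hc : IsCycle c) (hx : x ∈ c.support)
    (hy : y ∉ c.support) :
    IsCycle (Equiv.swap x y * c) ∧
      (Equiv.swap x y * c).support = insert y c.support := by
  have hxy : x ≠ y := fun h => hy (h ▸ hx)
  have hcy : c y = y := notMem_support.mp hy
  have hcx : c x ≠ x := mem_support.mp hx
  set f := Equiv.swap x y * c with hf
  have hfy : f y = x := by
    rw [hf, Perm.mul_apply, hcy, Equiv.swap_apply_right]
  have hsupp : f.support = insert y c.support := by
    ext z
    rw [mem_support, mem_insert]
    by_cases hzy : z = y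
    · subst hzy
      constructor
      · intro _; left; rfl
      · intro _; rw [hfy]; exact hxy
    · by_cases hzs : z ∈ c.support
      · have hcz : c z ∈ c.support := apply_mem_support.mpr hzs
        have hczy : c z ≠ y := fun h => hy (h ▸ hcz)
        constructor
        · intro _; right; exact hzs
        · intro _
          by_cases hczx : c z = x
          · rw [hf, Perm.mul_apply, hczx, Equiv.swap_apply_left]
            exact fun h => hzy h.symm
          · rw [hf, Perm.mul_apply, Equiv.swap_apply_of_ne_of_ne hczx hczy]
            exact mem_support.mp hzs
      · have hcz : c z = z := notMem_support.mp hzs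
        have hzx : z ≠ x := fun h => hzs (h ▸ hx)
        constructor
        · intro hfz
          exfalso
          apply hfz
          rw [hf, Perm.mul_apply, hcz, Equiv.swap_apply_of_ne_of_ne hzx hzy]
        · rintro (h | h)
          · exact absurd h hzy
          · exact absurd h hzs
  set p := Function.minimalPeriod (⇑c) x with hp
  have hppos : 0 < p := minPeriod_pos c x
  have hagree : ∀ j, j ≤ p - 1 → (f ^ j) x = (c ^ j) x := by
    apply pow_agree
    intro j hj
    have h1 : (c ^ (j + 1)) x ∈ c.support := by
      rw [pow_apply_mem_support]; exact hx
    have h2 : (c ^ (j + 1)) x ≠ y := fun h => hy (h ▸ h1)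
    have h3 : (c ^ (j + 1)) x ≠ x :=
      pow_ne_self_of_lt_minPeriod c x (Nat.succ_pos j) (by omega)
    rw [hf, Perm.mul_apply, step_eq, Equiv.swap_apply_of_ne_of_ne h3 h2]
  refine ⟨⟨y, by rw [hfy]; exact hxy, ?_⟩, hsupp⟩
  intro z hz
  have hzmem : z ∈ f.support := mem_support.mpr hz
  rw [hsupp, mem_insert] at hzmem
  rcases hzmem with hzy | hzs
  · exact hzy ▸ Equiv.Perm.SameCycle.refl f y
  · have hsc : c.SameCycle x z := hc.sameCycle hcx (mem_support.mp hzs)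
    obtain ⟨i, _, _, hie⟩ := hsc.exists_pow_eq c
    obtain ⟨j, hjp, hje⟩ := exists_pow_lt_period_eq c x i
    have hz_eq : (c ^ j) x = z := by rw [← hje, hie]
    have hfj : (f ^ (j + 1)) y = z := by
      have : (f ^ (j + 1)) y = (f ^ j) (f y) := by
        rw [pow_succ, Perm.mul_apply]
      rw [this, hfy, hagree j (by omega), hz_eq]
    exact ⟨(j + 1 : ℕ), by rw [zpow_natCast]; exact hfj⟩

/-- Stitching two disjoint cycles into one. -/
theorem stitch2 {c d : Perm α} {x y : α} (hc : IsCycle c) (hd : IsCycle d)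
    (hdisj : c.Disjoint d) (hx : x ∈ c.support) (hy : y ∈ d.support) :
    IsCycle (Equiv.swap x y * (c * d)) ∧
      (Equiv.swap x y * (c * d)).support = c.support ∪ d.support := by
  have hds : _root_.Disjoint c.support d.support :=
    Equiv.Perm.disjoint_iff_disjoint_support.mp hdisj
  have hxy : x ≠ y := fun h => (Finset.disjoint_left.mp hds) hx (h ▸ hy)
  have hyc : y ∉ c.support := Finset.disjoint_right.mp hds hy
  have hxd : x ∉ d.support := Finset.disjoint_left.mp hds hx
  have hdfix : ∀ z ∈ c.support, d z = z := fun z hz =>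
    notMem_support.mp (Finset.disjoint_left.mp hds hz)
  have hcfix : ∀ z ∈ d.support, c z = z := fun z hz =>
    notMem_support.mp (Finset.disjoint_right.mp hds hz)
  set f := Equiv.swap x y * (c * d) with hf
  have happ : ∀ z, f z = Equiv.swap x y (c (d z)) := by
    intro z; rw [hf, Perm.mul_apply, Perm.mul_apply]
  -- support
  have hsupp : f.support = c.support ∪ d.support := by
    ext z
    rw [mem_support, mem_union]
    by_cases hzc : z ∈ c.support
    · have hdz : d z = z := hdfix z hzc
      have hcz : c z ∈ c.support := apply_mem_support.mpr hzc
      have hczy : c z ≠ y := fun h => hyc (h ▸ hcz)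
      constructor
      · intro _; left; exact hzc
      · intro _
        by_cases hczx : c z = x
        · rw [happ, hdz, hczx, Equiv.swap_apply_left]
          intro h
          exact hyc (h ▸ hzc)
        · rw [happ, hdz, Equiv.swap_apply_of_ne_of_ne hczx hczy]
          exact mem_support.mp hzc
    · by_cases hzd : z ∈ d.support
      · have hdz : d z ∈ d.support := apply_mem_support.mpr hzd
        have hcd : c (d z) = d z := hcfix _ hdz
        have hdzx : d z ≠ x := fun h => hxd (h ▸ hdz)
        constructor
        · intro _; right; exact hzd
        · intro _
          by_cases hdzy : d z = y
          · rw [happ, hcd, hdzy, Equiv.swap_apply_right]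
            intro h
            exact hxd (h ▸ hzd)
          · rw [happ, hcd, Equiv.swap_apply_of_ne_of_ne hdzx hdzy]
            exact mem_support.mp hzd
      · have hdz : d z = z := notMem_support.mp hzd
        have hcz : c z = z := notMem_support.mp hzc
        have hzx : z ≠ x := fun h => hzc (h ▸ hx)
        have hzy : z ≠ y := fun h => hzd (h ▸ hy)
        constructor
        · intro hmoved
          exfalso; apply hmoved
          rw [happ, hdz, hcz, Equiv.swap_apply_of_ne_of_ne hzx hzy]
        · rintro (h | h)
          · exact absurd h hzc
          · exact absurd h hzd
  set p := Function.minimalPeriod (⇑c) x with hp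
  set q := Function.minimalPeriod (⇑d) y with hq
  have hppos : 0 < p := minPeriod_pos c x
  have hqpos : 0 < q := minPeriod_pos d y
  have hagree1 : ∀ j, j ≤ p - 1 → (f ^ j) x = (c ^ j) x := by
    apply pow_agree
    intro j hj
    have hmem : (c ^ j) x ∈ c.support := by rw [pow_apply_mem_support]; exact hx
    have hmem1 : (c ^ (j + 1)) x ∈ c.support := by rw [pow_apply_mem_support]; exact hx
    have h2 : (c ^ (j + 1)) x ≠ y := fun h => hyc (h ▸ hmem1)
    have h3 : (c ^ (j + 1)) x ≠ x :=
      pow_ne_self_of_lt_minPeriod c x (Nat.succ_pos j) (by omega)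
    rw [happ, hdfix _ hmem, step_eq, Equiv.swap_apply_of_ne_of_ne h3 h2]
  have hagree2 : ∀ j, j ≤ q - 1 → (f ^ j) y = (d ^ j) y := by
    apply pow_agree
    intro j hj
    have hmem1 : (d ^ (j + 1)) y ∈ d.support := by rw [pow_apply_mem_support]; exact hy
    have h2 : (d ^ (j + 1)) y ≠ x := fun h => hxd (h ▸ hmem1)
    have h3 : (d ^ (j + 1)) y ≠ y :=
      pow_ne_self_of_lt_minPeriod d y (Nat.succ_pos j) (by omega)
    rw [happ, step_eq, hcfix _ hmem1, Equiv.swap_apply_of_ne_of_ne h2 h3]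
  have hfp : (f ^ p) x = y := by
    have e3 : p - 1 + 1 = p := by omega
    have e2 : (f ^ p) x = f ((f ^ (p - 1)) x) := by
      conv_lhs => rw [← e3]
      exact (step_eq _).symm
    have hcpx : (c ^ p) x = x := pow_minPeriod_eq c x
    rw [e2, hagree1 _ le_rfl, happ,
      hdfix _ (by rw [pow_apply_mem_support]; exact hx), step_eq, e3,
      hcpx, Equiv.swap_apply_left]
  have hSCxy : f.SameCycle x y := ⟨(p : ℕ), by rw [zpow_natCast]; exact hfp⟩
  -- is cycle
  have hfx : f x ≠ x := by
    have hcx : c x ∈ c.support := apply_mem_support.mpr hx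
    have h1 : c x ≠ x := mem_support.mp hx
    have h2 : c x ≠ y := fun h => hyc (h ▸ hcx)
    rw [happ, hdfix _ hx, Equiv.swap_apply_of_ne_of_ne h1 h2]
    exact h1
  refine ⟨⟨x, hfx, ?_⟩, hsupp⟩
  intro z hz
  have hzmem : z ∈ f.support := mem_support.mpr hz
  rw [hsupp, mem_union] at hzmem
  rcases hzmem with hzs | hzs
  · have hsc : c.SameCycle x z := hc.sameCycle (mem_support.mp hx) (mem_support.mp hzs)
    obtain ⟨i, _, _, hie⟩ := hsc.exists_pow_eq c
    obtain ⟨j, hjp, hje⟩ := exists_pow_lt_period_eq c x i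
    exact ⟨(j : ℕ), by rw [zpow_natCast, hagree1 j (by omega), ← hje, hie]⟩
  · have hsc : d.SameCycle y z := hd.sameCycle (mem_support.mp hy) (mem_support.mp hzs)
    obtain ⟨i, _, _, hie⟩ := hsc.exists_pow_eq d
    obtain ⟨j, hjp, hje⟩ := exists_pow_lt_period_eq d y i
    have : f.SameCycle y z :=
      ⟨(j : ℕ), by rw [zpow_natCast, hagree2 j (by omega), ← hje, hie]⟩
    exact hSCxy.trans this
end Aux3

namespace Aux4
open Equiv Equiv.Perm Finset Aux Aux2 Aux3

variable {α : Type*} [Fintype α] [DecidableEq α]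

/-- Merge case where both points are fixed. -/
theorem merge_fix2 {σ : Perm α} {x y : α} (hxy : x ≠ y) (hx : σ x = x) (hy : σ y = y) :
    cycleCount (Equiv.swap x y * σ) + 1 = cycleCount σ := by
  have hdisj : (Equiv.swap x y).Disjoint σ := by
    intro z
    by_cases hzx : z = x
    · subst hzx; right; exact hx
    · by_cases hzy : z = y
      · subst hzy; right; exact hy
      · left; exact Equiv.swap_apply_of_ne_of_ne hzx hzy
  have hct : (Equiv.swap x y * σ).cycleType = (Equiv.swap x y).cycleType + σ.cycleType :=
    hdisj.cycleType_mul
  have hctsw : (Equiv.swap x y).cycleType = [2] := by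
    rw [(isCycle_swap hxy).cycleType, card_support_swap hxy]; rfl
  have hcard1 : Multiset.card (Equiv.swap x y * σ).cycleType
      = Multiset.card σ.cycleType + 1 := by
    rw [hct, hctsw]; simp [add_comm]
  have hsupp : (Equiv.swap x y * σ).support.card = 2 + σ.support.card := by
    rw [hdisj.support_mul, Finset.card_union_of_disjoint
      (Equiv.Perm.disjoint_iff_disjoint_support.mp hdisj), card_support_swap hxy]
  have hb : (Equiv.swap x y * σ).support.card ≤ Fintype.card α := Finset.card_le_univ _
  unfold cycleCount
  omega

/-- Merge case where `x` is moved and `y` is fixed. -/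
theorem merge_fix {σ : Perm α} {x y : α} (hxy : x ≠ y) (h : ¬σ.SameCycle x y)
    (hx : σ x ≠ x) (hy : σ y = y) :
    cycleCount (Equiv.swap x y * σ) + 1 = cycleCount σ := by
  classical
  set c := σ.cycleOf x with hc
  have hcf : c ∈ σ.cycleFactorsFinset :=
    cycleOf_mem_cycleFactorsFinset_iff.mpr (mem_support.mpr hx)
  have hcc : IsCycle c := isCycle_cycleOf σ hx
  have hxc : x ∈ c.support := by
    rw [hc, mem_support_cycleOf_iff]
    exact ⟨Equiv.Perm.SameCycle.refl _ _, mem_support.mpr hx⟩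
  have hyc : y ∉ c.support := by
    rw [hc, mem_support_cycleOf_iff]
    rintro ⟨h1, _⟩; exact h h1
  set ρ := σ * c⁻¹ with hρ
  have hdis : ρ.Disjoint c := disjoint_mul_inv_of_mem_cycleFactorsFinset hcf
  have hσeq : ρ * c = σ := by rw [hρ, inv_mul_cancel_right]
  have hρy : ρ y = y := by
    have : c⁻¹ y = y := by
      rw [← Equiv.Perm.notMem_support]
      rw [Equiv.Perm.support_inv]; exact hyc
    rw [hρ, Perm.mul_apply, this, hy]
  have hρx : ρ x = x := by
    rcases hdis x with h1 | h1
    · exact h1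
    · exfalso; rw [hc, cycleOf_apply_self] at h1; exact hx h1
  have hdisj2 : (Equiv.swap x y).Disjoint ρ := by
    intro z
    by_cases hzx : z = x
    · subst hzx; right; exact hρx
    · by_cases hzy : z = y
      · subst hzy; right; exact hρy
      · left; exact Equiv.swap_apply_of_ne_of_ne hzx hzy
  have key : Equiv.swap x y * σ = ρ * (Equiv.swap x y * c) := by
    rw [← hσeq, ← mul_assoc, hdisj2.commute.eq, mul_assoc]
  obtain ⟨hC, hS⟩ := stitch1 hcc hxc hyc
  have hdis2 : ρ.Disjoint (Equiv.swap x y * c) := by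
    rw [Equiv.Perm.disjoint_iff_disjoint_support, hS, Finset.disjoint_insert_right]
    refine ⟨by rw [Equiv.Perm.notMem_support]; exact hρy, ?_⟩
    exact Equiv.Perm.disjoint_iff_disjoint_support.mp hdis
  have hcard1 : Multiset.card (Equiv.swap x y * σ).cycleType
      = Multiset.card ρ.cycleType + 1 := by
    rw [key, hdis2.cycleType_mul, hC.cycleType]; simp
  have hcard2 : Multiset.card σ.cycleType = Multiset.card ρ.cycleType + 1 := by
    rw [← hσeq, hdis.cycleType_mul, hcc.cycleType]; simp
  have hsupc : (Equiv.swap x y * c).support.card = c.support.card + 1 := by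
    rw [hS, Finset.card_insert_of_notMem hyc]
  have hsupp1 : (Equiv.swap x y * σ).support.card
      = ρ.support.card + (c.support.card + 1) := by
    rw [key, hdis2.support_mul, Finset.card_union_of_disjoint
      (Equiv.Perm.disjoint_iff_disjoint_support.mp hdis2), hsupc]
  have hsupp2 : σ.support.card = ρ.support.card + c.support.card := by
    rw [← hσeq, hdis.support_mul, Finset.card_union_of_disjoint
      (Equiv.Perm.disjoint_iff_disjoint_support.mp hdis)]
  have hb : (Equiv.swap x y * σ).support.card ≤ Fintype.card α := Finset.card_le_univ _
  unfold cycleCount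
  omega

/-- Merge case where both points are moved (and not in the same cycle). -/
theorem merge_move {σ : Perm α} {x y : α} (hxy : x ≠ y) (h : ¬σ.SameCycle x y)
    (hx : σ x ≠ x) (hy : σ y ≠ y) :
    cycleCount (Equiv.swap x y * σ) + 1 = cycleCount σ := by
  classical
  set c := σ.cycleOf x with hc
  set d := σ.cycleOf y with hd
  have hcf : c ∈ σ.cycleFactorsFinset :=
    cycleOf_mem_cycleFactorsFinset_iff.mpr (mem_support.mpr hx)
  have hdf : d ∈ σ.cycleFactorsFinset :=
    cycleOf_mem_cycleFactorsFinset_iff.mpr (mem_support.mpr hy)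
  have hcc : IsCycle c := isCycle_cycleOf σ hx
  have hdd : IsCycle d := isCycle_cycleOf σ hy
  have hxc : x ∈ c.support := by
    rw [hc, mem_support_cycleOf_iff]
    exact ⟨Equiv.Perm.SameCycle.refl _ _, mem_support.mpr hx⟩
  have hyd : y ∈ d.support := by
    rw [hd, mem_support_cycleOf_iff]
    exact ⟨Equiv.Perm.SameCycle.refl _ _, mem_support.mpr hy⟩
  have hne : c ≠ d := by
    intro he
    apply h
    have : y ∈ c.support := he ▸ hyd
    rw [hc, mem_support_cycleOf_iff] at this
    exact this.1
  have hdiscd : c.Disjoint d :=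
    (cycleFactorsFinset_pairwise_disjoint σ) hcf hdf hne
  have hd' : d ∈ (σ * c⁻¹).cycleFactorsFinset := by
    rw [cycleFactorsFinset_mul_inv_mem_eq_sdiff hcf, Finset.mem_sdiff]
    exact ⟨hdf, by simp [hne.symm]⟩
  set ρ := σ * c⁻¹ * d⁻¹ with hρ
  have hdisρd : ρ.Disjoint d := disjoint_mul_inv_of_mem_cycleFactorsFinset hd'
  have hdisσc : (σ * c⁻¹).Disjoint c := disjoint_mul_inv_of_mem_cycleFactorsFinset hcf
  have hdisρc : ρ.Disjoint c := by
    rw [Equiv.Perm.disjoint_iff_disjoint_support]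
    have h1 : ρ.support ⊆ (σ * c⁻¹).support ∪ d⁻¹.support := support_mul_le _ _
    rw [Equiv.Perm.support_inv] at h1
    have h2 : _root_.Disjoint (σ * c⁻¹).support c.support :=
      Equiv.Perm.disjoint_iff_disjoint_support.mp hdisσc
    have h3 : _root_.Disjoint d.support c.support :=
      (Equiv.Perm.disjoint_iff_disjoint_support.mp hdiscd).symm
    exact Disjoint.mono_left h1 (Finset.disjoint_union_left.mpr ⟨h2, h3⟩)
  have hσeq : ρ * (c * d) = σ := by
    have hcd : c * d = d * c := hdiscd.commute.eq
    rw [hρ, hcd, ← mul_assoc, inv_mul_cancel_right, inv_mul_cancel_right]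
  have hρx : ρ x = x := by
    rcases hdisρc x with h1 | h1
    · exact h1
    · exfalso; rw [hc, cycleOf_apply_self] at h1; exact hx h1
  have hρy : ρ y = y := by
    rcases hdisρd y with h1 | h1
    · exact h1
    · exfalso; rw [hd, cycleOf_apply_self] at h1; exact hy h1
  have hdisj2 : (Equiv.swap x y).Disjoint ρ := by
    intro z
    by_cases hzx : z = x
    · subst hzx; right; exact hρx
    · by_cases hzy : z = y
      · subst hzy; right; exact hρy
      · left; exact Equiv.swap_apply_of_ne_of_ne hzx hzy
  have key : Equiv.swap x y * σ = ρ * (Equiv.swap x y * (c * d)) := by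
    rw [← hσeq, ← mul_assoc, hdisj2.commute.eq, mul_assoc]
  obtain ⟨hC, hS⟩ := stitch2 hcc hdd hdiscd hxc hyd
  have hdsupp : _root_.Disjoint c.support d.support :=
    Equiv.Perm.disjoint_iff_disjoint_support.mp hdiscd
  have hdisρcd : ρ.Disjoint (c * d) := by
    rw [Equiv.Perm.disjoint_iff_disjoint_support]
    have h1 : (c * d).support ⊆ c.support ∪ d.support := support_mul_le _ _
    exact Disjoint.mono_right h1 (Finset.disjoint_union_right.mpr
      ⟨Equiv.Perm.disjoint_iff_disjoint_support.mp hdisρc,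
       Equiv.Perm.disjoint_iff_disjoint_support.mp hdisρd⟩)
  have hdis2 : ρ.Disjoint (Equiv.swap x y * (c * d)) := by
    rw [Equiv.Perm.disjoint_iff_disjoint_support, hS]
    exact Finset.disjoint_union_right.mpr
      ⟨Equiv.Perm.disjoint_iff_disjoint_support.mp hdisρc,
       Equiv.Perm.disjoint_iff_disjoint_support.mp hdisρd⟩
  have hctcd : (c * d).cycleType = {c.support.card} + {d.support.card} := by
    rw [hdiscd.cycleType_mul, hcc.cycleType, hdd.cycleType]
  have hcard1 : Multiset.card (Equiv.swap x y * σ).cycleType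
      = Multiset.card ρ.cycleType + 1 := by
    rw [key, hdis2.cycleType_mul, hC.cycleType]; simp
  have hcard2 : Multiset.card σ.cycleType = Multiset.card ρ.cycleType + 2 := by
    rw [← hσeq, hdisρcd.cycleType_mul, hctcd]; simp
  have hsupcd : (c * d).support.card = c.support.card + d.support.card := by
    rw [hdiscd.support_mul, Finset.card_union_of_disjoint hdsupp]
  have hsupp1 : (Equiv.swap x y * σ).support.card
      = ρ.support.card + (c.support.card + d.support.card) := by
    rw [key, hdis2.support_mul, Finset.card_union_of_disjoint
      (Equiv.Perm.disjoint_iff_disjoint_support.mp hdis2), hS,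
      Finset.card_union_of_disjoint hdsupp]
  have hsupp2 : σ.support.card
      = ρ.support.card + (c.support.card + d.support.card) := by
    rw [← hσeq, hdisρcd.support_mul, Finset.card_union_of_disjoint
      (Equiv.Perm.disjoint_iff_disjoint_support.mp hdisρcd), hsupcd]
  have hb : (Equiv.swap x y * σ).support.card ≤ Fintype.card α := Finset.card_le_univ _
  unfold cycleCount
  omega

theorem cycleCount_swap_mul_of_not_sameCycle {σ : Perm α} {x y : α} (hxy : x ≠ y)
    (h : ¬σ.SameCycle x y) :
    cycleCount (Equiv.swap x y * σ) + 1 = cycleCount σ := by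
  by_cases hx : σ x = x
  · by_cases hy : σ y = y
    · exact merge_fix2 hxy hx hy
    · rw [Equiv.swap_comm]
      exact merge_fix hxy.symm (fun hc => h hc.symm) hy hx
  · by_cases hy : σ y = y
    · exact merge_fix hxy h hx hy
    · exact merge_move hxy h hx hy

theorem cycleCount_swap_mul_of_sameCycle {σ : Perm α} {x y : α} (hxy : x ≠ y)
    (h : σ.SameCycle x y) :
    cycleCount (Equiv.swap x y * σ) = cycleCount σ + 1 := by
  have h2 := Aux2.not_sameCycle_swap_mul hxy h
  have h3 := cycleCount_swap_mul_of_not_sameCycle hxy h2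
  rw [← mul_assoc, Equiv.swap_mul_self, one_mul] at h3
  omega

theorem permLen_swap_mul_le {σ : Perm α} {x y : α} (hxy : x ≠ y) :
    permLen (Equiv.swap x y * σ) ≤ permLen σ + 1 := by
  have h1 := Aux.permLen_add_cycleCount (Equiv.swap x y * σ)
  have h2 := Aux.permLen_add_cycleCount σ
  by_cases h : σ.SameCycle x y
  · have := cycleCount_swap_mul_of_sameCycle hxy h
    omega
  · have := cycleCount_swap_mul_of_not_sameCycle hxy h
    omega

theorem permLen_swap_mul_of_not_sameCycle {σ : Perm α} {x y : α} (hxy : x ≠ y)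
    (h : ¬σ.SameCycle x y) :
    permLen (Equiv.swap x y * σ) = permLen σ + 1 := by
  have h1 := Aux.permLen_add_cycleCount (Equiv.swap x y * σ)
  have h2 := Aux.permLen_add_cycleCount σ
  have := cycleCount_swap_mul_of_not_sameCycle hxy h
  omega

theorem permLen_swap_mul_of_sameCycle {σ : Perm α} {x y : α} (hxy : x ≠ y)
    (h : σ.SameCycle x y) :
    permLen (Equiv.swap x y * σ) + 1 = permLen σ := by
  have h1 := Aux.permLen_add_cycleCount (Equiv.swap x y * σ)
  have h2 := Aux.permLen_add_cycleCount σ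
  have h3 := cycleCount_swap_mul_of_sameCycle hxy h
  have h4 := Aux.cycleCount_le_card (Equiv.swap x y * σ)
  omega

theorem permLen_mul_le (σ ρ : Perm α) :
    permLen (σ * ρ) ≤ permLen σ + permLen ρ := by
  suffices H : ∀ m (σ : Perm α), permLen σ = m → ∀ ρ, permLen (σ * ρ) ≤ m + permLen ρ by
    exact H _ σ rfl ρ
  intro m
  induction m using Nat.strong_induction_on with
  | _ m ih =>
    intro σ hσ ρ
    by_cases h1 : σ = 1
    · subst h1
      rw [one_mul]
      rw [Aux.permLen_one] at hσ
      omega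
    · obtain ⟨x, hx⟩ : ∃ x, σ x ≠ x := by
        by_contra hc
        push_neg at hc
        exact h1 (Equiv.ext hc)
      have hxy : x ≠ σ x := fun hc => hx hc.symm
      have hsc : σ.SameCycle x (σ x) := ⟨1, by simp⟩
      have hsplit := permLen_swap_mul_of_sameCycle hxy hsc
      set σ₁ := Equiv.swap x (σ x) * σ with hσ₁
      have hrec : σ * ρ = Equiv.swap x (σ x) * (σ₁ * ρ) := by
        rw [hσ₁, ← mul_assoc, ← mul_assoc, Equiv.swap_mul_self, one_mul]
      have hm : permLen σ₁ < m := by omega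
      have hih := ih (permLen σ₁) (by omega) σ₁ rfl ρ
      calc permLen (σ * ρ) = permLen (Equiv.swap x (σ x) * (σ₁ * ρ)) := by rw [← hrec]
    _ ≤ permLen (σ₁ * ρ) + 1 := permLen_swap_mul_le hxy
    _ ≤ permLen σ₁ + permLen ρ + 1 := by omega
    _ ≤ m + permLen ρ := by omega

end Aux4

namespace Aux5
open Equiv Equiv.Perm Finset Aux Aux2 Aux3 Aux4

variable {n : ℕ}

/-- Block-preserving permutations. -/
def BP (σ : Equiv.Perm (Fin n ⊕ Fin n)) : Prop :=
  ∀ z, (σ z).isLeft = z.isLeft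

theorem BP_one : BP (1 : Equiv.Perm (Fin n ⊕ Fin n)) := fun _ => rfl

theorem BP_mul {σ τ : Equiv.Perm (Fin n ⊕ Fin n)} (hσ : BP σ) (hτ : BP τ) :
    BP (σ * τ) := fun z => by rw [Perm.mul_apply, hσ, hτ]

theorem BP_inv {σ : Equiv.Perm (Fin n ⊕ Fin n)} (hσ : BP σ) : BP σ⁻¹ := fun z => by
  have := hσ (σ⁻¹ z)
  rw [← Equiv.Perm.mul_apply, mul_inv_cancel, Equiv.Perm.one_apply] at this
  exact this.symm

theorem BP_pow {σ : Equiv.Perm (Fin n ⊕ Fin n)} (hσ : BP σ) (m : ℕ) : BP (σ ^ m) := by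
  induction m with
  | zero => exact BP_one
  | succ m ih => rw [pow_succ]; exact BP_mul ih hσ

theorem BP_zpow {σ : Equiv.Perm (Fin n ⊕ Fin n)} (hσ : BP σ) (i : ℤ) : BP (σ ^ i) := by
  cases i with
  | ofNat m => rw [Int.ofNat_eq_coe, zpow_natCast]; exact BP_pow hσ m
  | negSucc m => rw [zpow_negSucc]; exact BP_inv (BP_pow hσ (m + 1))

theorem BP_gamma : BP (gammaNN n) := by
  intro z
  cases z <;> rfl

theorem BP_swap {u v : Fin n ⊕ Fin n} (h : u.isLeft = v.isLeft) : BP (Equiv.swap u v) := by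
  intro z
  rcases eq_or_ne z u with h1 | h1
  · subst h1; rw [Equiv.swap_apply_left, ← h]
  · rcases eq_or_ne z v with h2 | h2
    · subst h2; rw [Equiv.swap_apply_right, h]
    · rw [Equiv.swap_apply_of_ne_of_ne h1 h2]

theorem not_sameCycle_of_BP {σ : Equiv.Perm (Fin n ⊕ Fin n)} (hσ : BP σ)
    {u v : Fin n ⊕ Fin n} (h : u.isLeft ≠ v.isLeft) : ¬σ.SameCycle u v := by
  rintro ⟨i, hi⟩
  exact h (by rw [← hi, BP_zpow hσ i])

theorem not_connected_of_BP {β : Equiv.Perm (Fin n ⊕ Fin n)} (hβ : BP β) :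
    ¬IsConnectedPerm β := by
  rintro ⟨a, b, hsc⟩
  exact not_sameCycle_of_BP hβ (by simp) hsc

theorem BP_of_not_connected {β : Equiv.Perm (Fin n ⊕ Fin n)} (hβ : ¬IsConnectedPerm β) :
    BP β := by
  intro z
  by_contra hc
  apply hβ
  cases hz : z with
  | inl a =>
    subst hz
    cases hb : β (Sum.inl a) with
    | inl a' => rw [hb] at hc; exact (hc rfl).elim
    | inr b => exact ⟨a, b, ⟨1, by simpa using hb⟩⟩
  | inr b =>
    subst hz
    cases hb : β (Sum.inr b) with
    | inl a =>
      refine ⟨a, b, ⟨-1, ?_⟩⟩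
      rw [zpow_neg, zpow_one]
      rw [← hb, ← Equiv.Perm.mul_apply, inv_mul_cancel, Equiv.Perm.one_apply]
    | inr b' => rw [hb] at hc; exact (hc rfl).elim

theorem gamma_zpow_inl (hn : 2 ≤ n) (i : ℤ) (a : Fin n) :
    (gammaNN n ^ i) (Sum.inl a) = Sum.inl ((finRotate n ^ i) a) := by
  have h1 : gammaNN n = Equiv.Perm.sumCongrHom (Fin n) (Fin n) (finRotate n, finRotate n) := rfl
  have h2 : gammaNN n ^ i
      = Equiv.Perm.sumCongrHom (Fin n) (Fin n) ((finRotate n, finRotate n) ^ i) := by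
    rw [h1, map_zpow]
  rw [h2]
  have h3 : ((finRotate n, finRotate n) ^ i : Perm (Fin n) × Perm (Fin n))
      = (finRotate n ^ i, finRotate n ^ i) := rfl
  rw [h3, Equiv.Perm.sumCongrHom_apply]
  rfl

theorem gamma_zpow_inr (hn : 2 ≤ n) (i : ℤ) (a : Fin n) :
    (gammaNN n ^ i) (Sum.inr a) = Sum.inr ((finRotate n ^ i) a) := by
  have h2 : gammaNN n ^ i
      = Equiv.Perm.sumCongrHom (Fin n) (Fin n) ((finRotate n, finRotate n) ^ i) := by
    rw [show gammaNN n = Equiv.Perm.sumCongrHom (Fin n) (Fin n) (finRotate n, finRotate n)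
      from rfl, map_zpow]
  rw [h2]
  rfl

theorem finRotate_moves (hn : 2 ≤ n) (a : Fin n) : finRotate n a ≠ a := by
  obtain ⟨m, rfl⟩ : ∃ m, n = m + 2 := ⟨n - 2, by omega⟩
  rw [finRotate_succ_apply]
  intro h
  rw [add_eq_left] at h
  simp at h

theorem gamma_moves (hn : 2 ≤ n) (z : Fin n ⊕ Fin n) : gammaNN n z ≠ z := by
  cases z with
  | inl a =>
    intro h
    exact finRotate_moves hn a (by simpa [gammaNN] using h)
  | inr a =>
    intro h
    exact finRotate_moves hn a (by simpa [gammaNN] using h)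

theorem finRotate_sameCycle (hn : 2 ≤ n) (a b : Fin n) :
    (finRotate n).SameCycle a b := by
  obtain ⟨m, rfl⟩ : ∃ m, n = m + 2 := ⟨n - 2, by omega⟩
  exact isCycle_finRotate.sameCycle (finRotate_moves hn a) (finRotate_moves hn b)

theorem gamma_sameCycle_inl (hn : 2 ≤ n) (a b : Fin n) :
    (gammaNN n).SameCycle (Sum.inl a) (Sum.inl b) := by
  obtain ⟨i, hi⟩ := finRotate_sameCycle hn a b
  exact ⟨i, by rw [gamma_zpow_inl hn, hi]⟩

theorem gamma_sameCycle_inr (hn : 2 ≤ n) (a b : Fin n) :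
    (gammaNN n).SameCycle (Sum.inr a) (Sum.inr b) := by
  obtain ⟨i, hi⟩ := finRotate_sameCycle hn a b
  exact ⟨i, by rw [gamma_zpow_inr hn, hi]⟩

theorem gamma_sameCycle_of_isLeft (hn : 2 ≤ n) {u v : Fin n ⊕ Fin n}
    (h : u.isLeft = v.isLeft) : (gammaNN n).SameCycle u v := by
  cases u with
  | inl a =>
    cases v with
    | inl b => exact gamma_sameCycle_inl hn a b
    | inr b => simp at h
  | inr a =>
    cases v with
    | inl b => simp at h
    | inr b => exact gamma_sameCycle_inr hn a b

theorem cycleCount_gamma (hn : 1 ≤ n) : cycleCount (gammaNN n) ≤ 2 := by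
  classical
  rcases eq_or_lt_of_le hn with h1 | h1
  · -- n = 1
    have hγ : gammaNN n = 1 := by
      ext z
      cases z with
      | inl a =>
        have : n = 1 := h1.symm
        subst this
        simp [gammaNN]
      | inr a =>
        have : n = 1 := h1.symm
        subst this
        simp [gammaNN]
    rw [hγ]
    unfold cycleCount
    simp
    omega
  · have hn2 : 2 ≤ n := h1
    set γ := gammaNN n with hγ
    have hsupp : γ.support = Finset.univ := by
      apply Finset.eq_univ_iff_forall.mpr
      intro z
      exact mem_support.mpr (gamma_moves hn2 z)
    have hfac : γ.cycleFactorsFinset.card ≤ 2 := by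
      have hcard2 : (Finset.univ : Finset Bool).card = 2 := by simp
      rw [← hcard2]
      apply Finset.card_le_card_of_injOn
        (fun c => decide (∃ a : Fin n, Sum.inl a ∈ c.support))
      · intro c _; exact Finset.mem_univ _
      · intro c₁ hc₁ c₂ hc₂ heq
        simp only [decide_eq_decide] at heq
        have hic₁ : c₁.IsCycle := (mem_cycleFactorsFinset_iff.mp hc₁).1
        have hic₂ : c₂.IsCycle := (mem_cycleFactorsFinset_iff.mp hc₂).1
        obtain ⟨z₁, hz₁⟩ := hic₁.nonempty_support
        obtain ⟨z₂, hz₂⟩ := hic₂.nonempty_support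
        have hkey : ∀ u v : Fin n ⊕ Fin n, u ∈ c₁.support → v ∈ c₂.support →
            u.isLeft = v.isLeft → c₁ = c₂ := by
          intro u v hu hv hiso
          have e1 : c₁ = γ.cycleOf u := cycle_is_cycleOf hu hc₁
          have e2 : c₂ = γ.cycleOf v := cycle_is_cycleOf hv hc₂
          rw [e1, e2]
          exact Equiv.Perm.SameCycle.cycleOf_eq (gamma_sameCycle_of_isLeft hn2 hiso)
        cases hz1t : z₁ with
        | inl a₁ =>
          have h1 : ∃ a : Fin n, Sum.inl a ∈ c₁.support := ⟨a₁, hz1t ▸ hz₁⟩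
          obtain ⟨a₂, ha₂⟩ := heq.mp h1
          exact hkey (Sum.inl a₁) (Sum.inl a₂) (by rw [← hz1t]; exact hz₁) ha₂ rfl
        | inr b₁ =>
          cases hz2t : z₂ with
          | inl a₂ =>
            have h2 : ∃ a : Fin n, Sum.inl a ∈ c₂.support := ⟨a₂, hz2t ▸ hz₂⟩
            obtain ⟨a₁, ha₁⟩ := heq.mpr h2
            exact hkey (Sum.inl a₁) (Sum.inl a₂) ha₁ (by rw [← hz2t]; exact hz₂) rfl
          | inr b₂ =>
            exact hkey (Sum.inr b₁) (Sum.inr b₂) (by rw [← hz1t]; exact hz₁)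
              (by rw [← hz2t]; exact hz₂) rfl
    have hctc : Multiset.card γ.cycleType = γ.cycleFactorsFinset.card := by
      rw [Equiv.Perm.cycleType_def, Multiset.card_map]
      rfl
    unfold cycleCount
    rw [hctc, hsupp]
    simp
    omega

theorem card_space (n : ℕ) : Fintype.card (Fin n ⊕ Fin n) = 2 * n := by
  rw [Fintype.card_sum, Fintype.card_fin]
  omega

/-- The universal lower bound `ℓ + r ≥ 2n - 2`. -/
theorem lr_ge (hn : 1 ≤ n) (β : Equiv.Perm (Fin n ⊕ Fin n)) :
    2 * n ≤ permLen ((gammaNN n)⁻¹ * β) + permLen β + 2 := by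
  have htr := permLen_mul_le β (β⁻¹ * gammaNN n)
  have he : β * (β⁻¹ * gammaNN n) = gammaNN n := by
    rw [← mul_assoc, mul_inv_cancel, one_mul]
  rw [he] at htr
  have hinv : permLen (β⁻¹ * gammaNN n) = permLen ((gammaNN n)⁻¹ * β) := by
    rw [← Aux.permLen_inv (β⁻¹ * gammaNN n), mul_inv_rev, inv_inv]
  have hγ := Aux.permLen_add_cycleCount (gammaNN n)
  rw [card_space] at hγ
  have hγ2 := cycleCount_gamma hn
  omega

/-- The refined lower bound for connected permutations: `ℓ + r ≥ 2n`. -/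
theorem connected_bound (hn : 1 ≤ n) (β : Equiv.Perm (Fin n ⊕ Fin n))
    (hconn : IsConnectedPerm β) :
    2 * n ≤ permLen ((gammaNN n)⁻¹ * β) + permLen β := by
  suffices H : ∀ m (β : Equiv.Perm (Fin n ⊕ Fin n)), permLen β = m →
      IsConnectedPerm β → 2 * n ≤ permLen ((gammaNN n)⁻¹ * β) + permLen β by
    exact H _ β rfl hconn
  intro m
  induction m using Nat.strong_induction_on with
  | _ m ih =>
    intro β hm hconn
    have hβ1 : β ≠ 1 := by
      intro hc
      subst hc
      exact not_connected_of_BP BP_one hconn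
    obtain ⟨x, hx⟩ : ∃ x, β x ≠ x := by
      by_contra hc
      push_neg at hc
      exact hβ1 (Equiv.ext hc)
    have hxy : x ≠ β x := fun hc => hx hc.symm
    have hsc : β.SameCycle x (β x) := ⟨1, by simp⟩
    have hsplit := permLen_swap_mul_of_sameCycle hxy hsc
    set β' := Equiv.swap x (β x) * β with hβ'
    have hββ' : β = Equiv.swap x (β x) * β' := by
      rw [hβ', ← mul_assoc, Equiv.swap_mul_self, one_mul]
    set x' := (gammaNN n)⁻¹ x with hx'
    set y' := (gammaNN n)⁻¹ (β x) with hy'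
    have hxy' : x' ≠ y' := fun hc => hxy (Equiv.injective _ hc)
    have hkey : (gammaNN n)⁻¹ * β' = Equiv.swap x' y' * ((gammaNN n)⁻¹ * β) := by
      have h1 : Equiv.swap x' y'
          = (gammaNN n)⁻¹ * Equiv.swap x (β x) * ((gammaNN n)⁻¹)⁻¹ :=
        Equiv.swap_apply_apply ((gammaNN n)⁻¹) x (β x)
      rw [h1]
      rw [inv_inv]
      rw [hβ']
      group
    by_cases hc : IsConnectedPerm β'
    · have hm1 : 1 ≤ m := by
        rw [← hm]
        exact Aux.one_le_permLen hβ1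
      have hih := ih (permLen β') (by omega) β' rfl hc
      have hle : permLen ((gammaNN n)⁻¹ * β')
          ≤ permLen ((gammaNN n)⁻¹ * β) + 1 := by
        rw [hkey]
        exact permLen_swap_mul_le hxy'
      omega
    · have hBPβ' : BP β' := BP_of_not_connected hc
      have hblocks : x.isLeft ≠ (β x).isLeft := by
        intro hiso
        apply not_connected_of_BP _ hconn
        rw [hββ']
        exact BP_mul (BP_swap hiso) hBPβ'
      have hBPγβ' : BP ((gammaNN n)⁻¹ * β') := BP_mul (BP_inv BP_gamma) hBPβ'
      have hxl : x'.isLeft = x.isLeft := BP_inv BP_gamma x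
      have hyl : y'.isLeft = (β x).isLeft := BP_inv BP_gamma (β x)
      have hblocks' : x'.isLeft ≠ y'.isLeft := by
        rw [hxl, hyl]; exact hblocks
      have hns : ¬((gammaNN n)⁻¹ * β').SameCycle x' y' :=
        not_sameCycle_of_BP hBPγβ' hblocks'
      have hγβeq : (gammaNN n)⁻¹ * β = Equiv.swap x' y' * ((gammaNN n)⁻¹ * β') := by
        rw [hkey, ← mul_assoc, Equiv.swap_mul_self, one_mul]
      have hmerge : permLen ((gammaNN n)⁻¹ * β)
          = permLen ((gammaNN n)⁻¹ * β') + 1 := by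
        rw [hγβeq]
        exact permLen_swap_mul_of_not_sameCycle hxy' hns
      have hbase := lr_ge hn β'
      omega

end Aux5

noncomputable def Lw (n k : ℕ) (B : Fin k → Equiv.Perm (Fin n ⊕ Fin n)) (i : Fin k) : ℤ :=
  (permLen ((gammaNN n)⁻¹ * B i) : ℤ)

noncomputable def Rw (n k : ℕ) (B : Fin k → Equiv.Perm (Fin n ⊕ Fin n)) (i : Fin k) : ℤ :=
  (permLen (B i) : ℤ)

noncomputable def Ww (n k : ℕ) (B : Fin k → Equiv.Perm (Fin n ⊕ Fin n)) (i j : Fin k) : ℤ :=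
  (permLen ((B i)⁻¹ * B j) : ℤ)

namespace Aux6
open Equiv Equiv.Perm Finset

theorem antisym_pair_sum {k : ℕ} (g : Fin k → Fin k → ℤ)
    (hg : ∀ i j, g i j = - g j i) (Q : Fin k → ℤ) :
    ∑ i, ∑ j, g i j * Q i = ∑ i, ∑ j, (if i < j then g i j * (Q i - Q j) else 0) := by
  have hdiag : ∀ i, g i i = 0 := by
    intro i
    have := hg i i
    omega
  have hsplit : ∀ i j : Fin k, g i j * Q i
      = (if i < j then g i j * Q i else 0) + (if j < i then g i j * Q i else 0) := by
    intro i j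
    rcases lt_trichotomy i j with h | h | h
    · rw [if_pos h, if_neg (asymm h), add_zero]
    · subst h
      simp [hdiag]
    · rw [if_neg (asymm h), if_pos h, zero_add]
  calc ∑ i, ∑ j, g i j * Q i
      = ∑ i, ∑ j, ((if i < j then g i j * Q i else 0)
          + (if j < i then g i j * Q i else 0)) := by
        apply Finset.sum_congr rfl; intro i _
        apply Finset.sum_congr rfl; intro j _
        exact hsplit i j
    _ = (∑ i, ∑ j, (if i < j then g i j * Q i else 0))
        + ∑ i, ∑ j, (if j < i then g i j * Q i else 0) := by
        rw [← Finset.sum_add_distrib]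
        apply Finset.sum_congr rfl; intro i _
        rw [← Finset.sum_add_distrib]
    _ = (∑ i, ∑ j, (if i < j then g i j * Q i else 0))
        + ∑ i, ∑ j, (if i < j then g j i * Q j else 0) := by
        congr 1
        rw [Finset.sum_comm]
    _ = ∑ i, ∑ j, (if i < j then g i j * (Q i - Q j) else 0) := by
        rw [← Finset.sum_add_distrib]
        apply Finset.sum_congr rfl; intro i _
        rw [← Finset.sum_add_distrib]
        apply Finset.sum_congr rfl; intro j _
        split_ifs with h
        · rw [hg j i]; ring
        · ring

theorem master (n k : ℕ) (s t : Fin k → ℕ) (e : Fin k → Fin k → ℕ)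
    (hsym : ∀ i j, i ≠ j → e i j = e j i)
    (B : Fin k → Equiv.Perm (Fin n ⊕ Fin n))
    (D : ℤ)
    (hW0 : ∀ i j, 0 ≤ Ww n k B i j)
    (hWs : ∀ i j, Ww n k B i j = Ww n k B j i)
    (p : Fin k → ℤ) (hp0 : ∀ i, 0 ≤ p i) (hpl : ∀ i, p i ≤ Lw n k B i)
    (hpr : ∀ i, D - p i ≤ Rw n k B i)
    (hpw : ∀ i j, |p i - p j| ≤ Ww n k B i j)
    (i₀ j₀ : Fin k) (hne : i₀ ≠ j₀)
    (f : NetVertex k → NetVertex k → ℤ) (hf : IsFlow (netCap s t e) f) :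
    flowValue f * D
      + ((s i₀ : ℤ) * (Lw n k B i₀ - p i₀)
        + (t i₀ : ℤ) * (Rw n k B i₀ - max (D - p i₀) 0)
        + (e i₀ j₀ : ℤ) * (Ww n k B i₀ j₀ - |p i₀ - p j₀|)
        + (s j₀ : ℤ) * (Lw n k B j₀ - p j₀)
        + (t j₀ : ℤ) * (Rw n k B j₀ - max (D - p j₀) 0))
      ≤ (FnnOne n k s t e B : ℤ) := by
  classical
  obtain ⟨hcap, hskew, hcons⟩ := hf
  set L := Lw n k B with hL
  set R := Rw n k B with hR
  set W := Ww n k B with hWd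
  set a : Fin k → ℤ := fun i => f (Sum.inr true) (Sum.inl i) with ha
  set b : Fin k → ℤ := fun i => f (Sum.inl i) (Sum.inr false) with hb
  set g : Fin k → Fin k → ℤ := fun i j => f (Sum.inl i) (Sum.inl j) with hg
  -- basic facts
  have hL0 : ∀ i, 0 ≤ L i := fun i => Int.ofNat_nonneg _
  have hR0 : ∀ i, 0 ≤ R i := fun i => Int.ofNat_nonneg _
  have ha0 : ∀ i, 0 ≤ a i := by
    intro i
    have h1 := hcap (Sum.inl i) (Sum.inr true)
    have h2 : netCap s t e (Sum.inl i) (Sum.inr true) = 0 := rfl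
    have h3 := hskew (Sum.inr true) (Sum.inl i)
    rw [h2] at h1
    simp only [ha]
    omega
  have has : ∀ i, a i ≤ (s i : ℤ) := by
    intro i
    have h1 := hcap (Sum.inr true) (Sum.inl i)
    have h2 : netCap s t e (Sum.inr true) (Sum.inl i) = (s i : ℤ) := rfl
    rw [h2] at h1
    exact h1
  have hb0 : ∀ i, 0 ≤ b i := by
    intro i
    have h1 := hcap (Sum.inr false) (Sum.inl i)
    have h2 : netCap s t e (Sum.inr false) (Sum.inl i) = 0 := rfl
    have h3 := hskew (Sum.inl i) (Sum.inr false)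
    rw [h2] at h1
    simp only [hb]
    omega
  have hbt : ∀ i, b i ≤ (t i : ℤ) := by
    intro i
    have h1 := hcap (Sum.inl i) (Sum.inr false)
    have h2 : netCap s t e (Sum.inl i) (Sum.inr false) = (t i : ℤ) := rfl
    rw [h2] at h1
    exact h1
  have hgskew : ∀ i j, g i j = - g j i := fun i j => hskew (Sum.inl i) (Sum.inl j)
  have hgabs : ∀ i j, i ≠ j → |g i j| ≤ (e i j : ℤ) := by
    intro i j hij
    have h1 := hcap (Sum.inl i) (Sum.inl j)
    have h2 : netCap s t e (Sum.inl i) (Sum.inl j) = if i = j then 0 else (e i j : ℤ) := rfl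
    rw [h2, if_neg hij] at h1
    have h3 := hcap (Sum.inl j) (Sum.inl i)
    have h4 : netCap s t e (Sum.inl j) (Sum.inl i) = if j = i then 0 else (e j i : ℤ) := rfl
    rw [h4, if_neg (Ne.symm hij)] at h3
    have h5 := hgskew i j
    have h6 : (e j i : ℤ) = (e i j : ℤ) := by
      exact_mod_cast hsym j i (Ne.symm hij)
    have e1 : f (Sum.inl i) (Sum.inl j) = g i j := rfl
    have e2 : f (Sum.inl j) (Sum.inl i) = g j i := rfl
    rw [e1] at h1
    rw [e2] at h3
    clear h2 h4
    rw [abs_le]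
    constructor <;> omega
  have hconsv : ∀ i, a i = b i + ∑ j, g i j := by
    intro i
    have h1 := hcons (Sum.inl i) (by simp [netSrc]) (by simp [netSnk])
    rw [Fintype.sum_sum_type] at h1
    rw [Fintype.sum_bool] at h1
    have h2 : f (Sum.inr false) (Sum.inl i) = - b i := by
      rw [hb]; exact hskew _ _
    have h3 : ∀ j, f (Sum.inl j) (Sum.inl i) = - g i j := by
      intro j; rw [hg]; exact hskew _ _
    rw [h2] at h1
    have h4 : ∑ j, f (Sum.inl j) (Sum.inl i) = - ∑ j, g i j := by
      rw [← Finset.sum_neg_distrib]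
      exact Finset.sum_congr rfl fun j _ => h3 j
    rw [h4] at h1
    have h5 : f (Sum.inr true) (Sum.inl i) = a i := rfl
    omega
  have hval : flowValue f = ∑ i, a i := by
    unfold flowValue netSrc
    rw [Fintype.sum_sum_type, Fintype.sum_bool]
    have h1 : f (Sum.inr true) (Sum.inr true) = 0 := by
      have := hskew (Sum.inr true) (Sum.inr true)
      omega
    have h2 : f (Sum.inr true) (Sum.inr false) = 0 := by
      have hc1 := hcap (Sum.inr true) (Sum.inr false)
      have hc2 := hcap (Sum.inr false) (Sum.inr true)
      have e1 : netCap s t e (Sum.inr true) (Sum.inr false) = 0 := rfl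
      have e2 : netCap s t e (Sum.inr false) (Sum.inr true) = 0 := rfl
      have h3 := hskew (Sum.inr true) (Sum.inr false)
      rw [e1] at hc1; rw [e2] at hc2
      omega
    rw [h1, h2]
    simp [ha]
  -- key identity
  have hkey : flowValue f * D
      = ∑ i, (a i * p i + b i * (D - p i))
        + ∑ i, ∑ j, (if i < j then g i j * (p j - p i) else 0) := by
    rw [hval, Finset.sum_mul]
    have h1 : ∀ i : Fin k, a i * D
        = (a i * p i + b i * (D - p i)) + (∑ j, g i j * (D - p i)) := by
      intro i
      rw [← Finset.sum_mul]
      rw [hconsv i]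
      ring
    rw [Finset.sum_congr rfl (fun i _ => h1 i), Finset.sum_add_distrib]
    congr 1
    have h2 := antisym_pair_sum g hgskew (fun i => D - p i)
    rw [h2]
    apply Finset.sum_congr rfl; intro i _
    apply Finset.sum_congr rfl; intro j _
    split_ifs with h
    · ring
    · rfl
  -- cast of FnnOne
  have hF : (FnnOne n k s t e B : ℤ)
      = (∑ i, ((s i : ℤ) * L i + (t i : ℤ) * R i))
        + ∑ i, ∑ j, (if i < j then (e i j : ℤ) * W i j else 0) := by
    unfold FnnOne
    push_cast
    rfl
  -- per-vertex bounds
  have hA : ∀ i : Fin k, a i * p i + b i * (D - p i)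
      + ((s i : ℤ) * (L i - p i) + (t i : ℤ) * (R i - max (D - p i) 0))
      ≤ (s i : ℤ) * L i + (t i : ℤ) * R i := by
    intro i
    have h1 : a i * p i ≤ (s i : ℤ) * p i :=
      mul_le_mul_of_nonneg_right (has i) (hp0 i)
    have h2 : b i * (D - p i) ≤ (t i : ℤ) * max (D - p i) 0 := by
      calc b i * (D - p i) ≤ b i * max (D - p i) 0 :=
            mul_le_mul_of_nonneg_left (le_max_left _ _) (hb0 i)
        _ ≤ (t i : ℤ) * max (D - p i) 0 :=
            mul_le_mul_of_nonneg_right (hbt i) (le_max_right _ _)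
    nlinarith [h1, h2]
  have hAnn : ∀ i : Fin k,
      0 ≤ (s i : ℤ) * (L i - p i) + (t i : ℤ) * (R i - max (D - p i) 0) := by
    intro i
    have h1 : 0 ≤ (s i : ℤ) * (L i - p i) :=
      mul_nonneg (Int.ofNat_nonneg _) (by have := hpl i; omega)
    have h2 : 0 ≤ (t i : ℤ) * (R i - max (D - p i) 0) := by
      apply mul_nonneg (Int.ofNat_nonneg _)
      have h3 : max (D - p i) 0 ≤ R i := max_le (hpr i) (hR0 i)
      omega
    omega
  have hE : ∀ i j : Fin k, i ≠ j →
      g i j * (p j - p i) + (e i j : ℤ) * (W i j - |p i - p j|)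
        ≤ (e i j : ℤ) * W i j := by
    intro i j hij
    have h1 : g i j * (p j - p i) ≤ (e i j : ℤ) * |p i - p j| := by
      calc g i j * (p j - p i) ≤ |g i j * (p j - p i)| := le_abs_self _
        _ = |g i j| * |p j - p i| := abs_mul _ _
        _ ≤ (e i j : ℤ) * |p j - p i| :=
            mul_le_mul_of_nonneg_right (hgabs i j hij) (abs_nonneg _)
        _ = (e i j : ℤ) * |p i - p j| := by rw [abs_sub_comm]
    nlinarith [h1]
  have hEnn : ∀ i j : Fin k, 0 ≤ (e i j : ℤ) * (W i j - |p i - p j|) := by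
    intro i j
    apply mul_nonneg (Int.ofNat_nonneg _)
    have := hpw i j
    omega
  -- sum bound for vertex part
  have hsumA : ∑ i, (a i * p i + b i * (D - p i))
      + ((s i₀ : ℤ) * (L i₀ - p i₀) + (t i₀ : ℤ) * (R i₀ - max (D - p i₀) 0))
      + ((s j₀ : ℤ) * (L j₀ - p j₀) + (t j₀ : ℤ) * (R j₀ - max (D - p j₀) 0))
      ≤ ∑ i, ((s i : ℤ) * L i + (t i : ℤ) * R i) := by
    have h1 : ∑ i, ((a i * p i + b i * (D - p i))
        + ((s i : ℤ) * (L i - p i) + (t i : ℤ) * (R i - max (D - p i) 0)))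
        ≤ ∑ i, ((s i : ℤ) * L i + (t i : ℤ) * R i) :=
      Finset.sum_le_sum (fun i _ => hA i)
    rw [Finset.sum_add_distrib] at h1
    have h2 : ((s i₀ : ℤ) * (L i₀ - p i₀) + (t i₀ : ℤ) * (R i₀ - max (D - p i₀) 0))
        + ((s j₀ : ℤ) * (L j₀ - p j₀) + (t j₀ : ℤ) * (R j₀ - max (D - p j₀) 0))
        ≤ ∑ i, ((s i : ℤ) * (L i - p i) + (t i : ℤ) * (R i - max (D - p i) 0)) := by
      have h3 := Finset.sum_le_sum_of_subset_of_nonneg (s := ({i₀, j₀} : Finset (Fin k)))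
        (Finset.subset_univ _) (fun i _ _ => hAnn i)
      rwa [Finset.sum_pair hne] at h3
    omega
  -- sum bound for edge part
  have hgain_eq : (e i₀ j₀ : ℤ) * (W i₀ j₀ - |p i₀ - p j₀|)
      = (e (min i₀ j₀) (max i₀ j₀) : ℤ)
        * (W (min i₀ j₀) (max i₀ j₀) - |p (min i₀ j₀) - p (max i₀ j₀)|) := by
    rcases hne.lt_or_gt with h | h
    · rw [min_eq_left h.le, max_eq_right h.le]
    · rw [min_eq_right h.le, max_eq_left h.le]
      rw [show (e i₀ j₀ : ℤ) = (e j₀ i₀ : ℤ) from by exact_mod_cast hsym i₀ j₀ hne,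
        hWs i₀ j₀, abs_sub_comm]
  have hsumE : ∑ i, ∑ j, (if i < j then g i j * (p j - p i) else 0)
      + (e i₀ j₀ : ℤ) * (W i₀ j₀ - |p i₀ - p j₀|)
      ≤ ∑ i, ∑ j, (if i < j then (e i j : ℤ) * W i j else 0) := by
    set u := min i₀ j₀ with hu
    set v := max i₀ j₀ with hv
    have huv : u < v := by
      rcases hne.lt_or_gt with h | h
      · rw [hu, hv, min_eq_left h.le, max_eq_right h.le]; exact h
      · rw [hu, hv, min_eq_right h.le, max_eq_left h.le]; exact h
    have hXY : ∀ i j : Fin k,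
        (if i < j then g i j * (p j - p i) else 0)
          ≤ (if i < j then (e i j : ℤ) * W i j else 0) := by
      intro i j
      split_ifs with h
      · have := hE i j (ne_of_lt h)
        have := hEnn i j
        omega
      · exact le_refl 0
    have hterm : (if u < v then g u v * (p v - p u) else 0)
        + (e u v : ℤ) * (W u v - |p u - p v|)
        ≤ (if u < v then (e u v : ℤ) * W u v else 0) := by
      rw [if_pos huv, if_pos huv]
      exact hE u v (ne_of_lt huv)
    -- difference form
    have hdiff : ∀ i : Fin k, 0 ≤ ∑ j, ((if i < j then (e i j : ℤ) * W i j else 0)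
        - (if i < j then g i j * (p j - p i) else 0)) := by
      intro i
      apply Finset.sum_nonneg
      intro j _
      have := hXY i j
      omega
    have hstep1 : (e u v : ℤ) * (W u v - |p u - p v|)
        ≤ ∑ j, ((if u < j then (e u j : ℤ) * W u j else 0)
            - (if u < j then g u j * (p j - p u) else 0)) := by
      have h1 : (e u v : ℤ) * (W u v - |p u - p v|)
          ≤ (if u < v then (e u v : ℤ) * W u v else 0)
            - (if u < v then g u v * (p v - p u) else 0) := by
        rw [if_pos huv, if_pos huv]
        have := hterm
        rw [if_pos huv, if_pos huv] at this
        omega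
      refine le_trans h1 (Finset.single_le_sum
        (f := fun j => (if u < j then (e u j : ℤ) * W u j else 0)
          - (if u < j then g u j * (p j - p u) else 0)) (fun j _ => ?_) (Finset.mem_univ v))
      beta_reduce
      have := hXY u j
      omega
    have hstep2 : (e u v : ℤ) * (W u v - |p u - p v|)
        ≤ ∑ i, ∑ j, ((if i < j then (e i j : ℤ) * W i j else 0)
            - (if i < j then g i j * (p j - p i) else 0)) := by
      refine le_trans hstep1 (Finset.single_le_sum
        (f := fun i => ∑ j, ((if i < j then (e i j : ℤ) * W i j else 0)
          - (if i < j then g i j * (p j - p i) else 0))) (fun i _ => hdiff i) (Finset.mem_univ u))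
    have hsub : ∑ i, ∑ j, ((if i < j then (e i j : ℤ) * W i j else 0)
            - (if i < j then g i j * (p j - p i) else 0))
        = ∑ i, ∑ j, (if i < j then (e i j : ℤ) * W i j else 0)
          - ∑ i, ∑ j, (if i < j then g i j * (p j - p i) else 0) := by
      rw [← Finset.sum_sub_distrib]
      apply Finset.sum_congr rfl; intro i _
      rw [← Finset.sum_sub_distrib]
    rw [hgain_eq]
    rw [hsub] at hstep2
    omega
  rw [hkey, hF]
  omega
end Aux6

namespace Aux7
open Equiv Equiv.Perm Finset

variable {n k : ℕ}

theorem W_nonneg (B : Fin k → Equiv.Perm (Fin n ⊕ Fin n)) (i j : Fin k) :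
    0 ≤ Ww n k B i j := Int.ofNat_nonneg _

theorem L_nonneg (B : Fin k → Equiv.Perm (Fin n ⊕ Fin n)) (i : Fin k) :
    0 ≤ Lw n k B i := Int.ofNat_nonneg _

theorem R_nonneg (B : Fin k → Equiv.Perm (Fin n ⊕ Fin n)) (i : Fin k) :
    0 ≤ Rw n k B i := Int.ofNat_nonneg _

theorem W_symm (B : Fin k → Equiv.Perm (Fin n ⊕ Fin n)) (i j : Fin k) :
    Ww n k B i j = Ww n k B j i := by
  unfold Ww
  congr 1
  rw [← Aux.permLen_inv ((B i)⁻¹ * B j), mul_inv_rev, inv_inv]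

theorem L_tri (B : Fin k → Equiv.Perm (Fin n ⊕ Fin n)) (i j : Fin k) :
    Lw n k B j ≤ Lw n k B i + Ww n k B i j := by
  unfold Lw Ww
  have h := Aux4.permLen_mul_le ((gammaNN n)⁻¹ * B i) ((B i)⁻¹ * B j)
  have he : ((gammaNN n)⁻¹ * B i) * ((B i)⁻¹ * B j) = (gammaNN n)⁻¹ * B j := by
    group
  rw [he] at h
  exact_mod_cast h

theorem R_tri (B : Fin k → Equiv.Perm (Fin n ⊕ Fin n)) (i j : Fin k) :
    Rw n k B j ≤ Rw n k B i + Ww n k B i j := by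
  unfold Rw Ww
  have h := Aux4.permLen_mul_le (B i) ((B i)⁻¹ * B j)
  have he : (B i) * ((B i)⁻¹ * B j) = B j := by group
  rw [he] at h
  exact_mod_cast h

theorem LR_ge (hn : 1 ≤ n) (B : Fin k → Equiv.Perm (Fin n ⊕ Fin n)) (i : Fin k) :
    2 * (n : ℤ) - 2 ≤ Lw n k B i + Rw n k B i := by
  have h := Aux5.lr_ge hn (B i)
  unfold Lw Rw
  have h2 : (2 * n : ℤ) ≤ (permLen ((gammaNN n)⁻¹ * B i) : ℤ)
      + (permLen (B i) : ℤ) + 2 := by exact_mod_cast h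
  omega

theorem LR_conn (hn : 1 ≤ n) (B : Fin k → Equiv.Perm (Fin n ⊕ Fin n)) (i : Fin k)
    (hc : IsConnectedPerm (B i)) :
    2 * (n : ℤ) ≤ Lw n k B i + Rw n k B i := by
  have h := Aux5.connected_bound hn (B i) hc
  unfold Lw Rw
  exact_mod_cast h

theorem R_one (B : Fin k → Equiv.Perm (Fin n ⊕ Fin n)) (i : Fin k)
    (hc : IsConnectedPerm (B i)) : 1 ≤ Rw n k B i := by
  unfold Rw
  have : B i ≠ 1 := by
    intro h
    exact Aux5.not_connected_of_BP (h ▸ Aux5.BP_one) hc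
  exact_mod_cast Aux.one_le_permLen this

theorem L_one (B : Fin k → Equiv.Perm (Fin n ⊕ Fin n)) (i : Fin k)
    (hc : IsConnectedPerm (B i)) : 1 ≤ Lw n k B i := by
  unfold Lw
  have : (gammaNN n)⁻¹ * B i ≠ 1 := by
    intro h
    have hBi : B i = gammaNN n := by
      have := congrArg (fun x => gammaNN n * x) h
      simpa [← mul_assoc] using this
    exact Aux5.not_connected_of_BP (hBi ▸ Aux5.BP_gamma) hc
  exact_mod_cast Aux.one_le_permLen this

theorem W_eq_zero (B : Fin k → Equiv.Perm (Fin n ⊕ Fin n)) (i j : Fin k)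
    (h : Ww n k B i j = 0) : B j = B i := by
  unfold Ww at h
  have h1 : permLen ((B i)⁻¹ * B j) = 0 := by exact_mod_cast h
  have h2 := Aux.permLen_eq_zero_iff.mp h1
  have := inv_mul_eq_one.mp h2
  exact this.symm

end Aux7

namespace Aux8
open Equiv Equiv.Perm Finset

theorem bullet1 (n k : ℕ) (hn : 1 ≤ n)
    (s t : Fin k → ℕ) (e : Fin k → Fin k → ℕ)
    (hsym : ∀ i j, i ≠ j → e i j = e j i)
    (hst : ∀ i, 0 < s i + t i)
    (he : ∀ i, 0 < ∑ j ∈ Finset.univ.erase i, e i j)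
    (B : Fin k → Equiv.Perm (Fin n ⊕ Fin n))
    (hconn : ∃ i, IsConnectedPerm (B i)) :
    ∀ f : NetVertex k → NetVertex k → ℤ, IsFlow (netCap s t e) f →
      flowValue f * (2 * (n : ℤ) - 2) + 2 ≤ (FnnOne n k s t e B : ℤ) := by
  intro f hf
  set D : ℤ := 2 * (n : ℤ) - 2 with hD
  obtain ⟨i₀, hc₀⟩ := hconn
  have hn' : (1 : ℤ) ≤ (n : ℤ) := by exact_mod_cast hn
  have hDnn : 0 ≤ D := by omega
  -- choose the neighbour j₀
  obtain ⟨j₀, hj₀mem, hj₀e⟩ : ∃ j ∈ Finset.univ.erase i₀, 0 < e i₀ j := by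
    by_contra hcon
    push_neg at hcon
    have hz : ∑ j ∈ Finset.univ.erase i₀, e i₀ j = 0 :=
      Finset.sum_eq_zero (fun j hj => Nat.le_zero.mp (hcon j hj))
    have := he i₀
    omega
  have hne : i₀ ≠ j₀ := (Finset.ne_of_mem_erase hj₀mem).symm
  have he1 : (1 : ℤ) ≤ (e i₀ j₀ : ℤ) := by exact_mod_cast hj₀e
  have hLR := Aux7.LR_ge hn B
  have hLRc := Aux7.LR_conn hn B i₀ hc₀
  have hL1c := Aux7.L_one B i₀ hc₀
  have hR1c := Aux7.R_one B i₀ hc₀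
  have hWnn := Aux7.W_nonneg B
  have hLnn := Aux7.L_nonneg B
  have hRnn := Aux7.R_nonneg B
  by_cases hs : 1 ≤ s i₀
  · -- use the potential q i = max (D - R i) 0
    have hs1 : (1 : ℤ) ≤ (s i₀ : ℤ) := by exact_mod_cast hs
    set q : Fin k → ℤ := fun i => max (D - Rw n k B i) 0 with hq
    have hq0 : ∀ i, 0 ≤ q i := fun i => le_max_right _ _
    have hql : ∀ i, q i ≤ Lw n k B i := by
      intro i
      apply max_le
      · have := hLR i; omega
      · exact hLnn i
    have hqr : ∀ i, D - q i ≤ Rw n k B i := by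
      intro i
      have h1 : D - Rw n k B i ≤ q i := le_max_left _ _
      omega
    have hqw : ∀ i j, |q i - q j| ≤ Ww n k B i j := by
      intro i j
      have h1 := abs_max_sub_max_le_abs (D - Rw n k B i) (D - Rw n k B j) 0
      have h2 : |D - Rw n k B i - (D - Rw n k B j)| = |Rw n k B j - Rw n k B i| := by
        congr 1; ring
      have h3 : |Rw n k B j - Rw n k B i| ≤ Ww n k B i j := by
        rw [abs_sub_le_iff]
        constructor
        · have := Aux7.R_tri B i j; omega
        · have h4 := Aux7.R_tri B j i
          have h5 := Aux7.W_symm B i j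
          omega
      calc |q i - q j| = |max (D - Rw n k B i) 0 - max (D - Rw n k B j) 0| := by rw [hq]
        _ ≤ |D - Rw n k B i - (D - Rw n k B j)| := h1
        _ = |Rw n k B j - Rw n k B i| := h2
        _ ≤ Ww n k B i j := h3
    have hm := Aux6.master n k s t e hsym B D hWnn (Aux7.W_symm B) q hq0 hql hqr hqw
      i₀ j₀ hne f hf
    -- nonnegativity of the five gain terms
    have hg1nn : 0 ≤ (s i₀ : ℤ) * (Lw n k B i₀ - q i₀) :=
      mul_nonneg (Int.ofNat_nonneg _) (by have := hql i₀; omega)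
    have hg2nn : 0 ≤ (t i₀ : ℤ) * (Rw n k B i₀ - max (D - q i₀) 0) := by
      apply mul_nonneg (Int.ofNat_nonneg _)
      have h3 := max_le (hqr i₀) (hRnn i₀)
      omega
    have hg3nn : 0 ≤ (e i₀ j₀ : ℤ) * (Ww n k B i₀ j₀ - |q i₀ - q j₀|) :=
      mul_nonneg (Int.ofNat_nonneg _) (by have := hqw i₀ j₀; omega)
    have hg4nn : 0 ≤ (s j₀ : ℤ) * (Lw n k B j₀ - q j₀) :=
      mul_nonneg (Int.ofNat_nonneg _) (by have := hql j₀; omega)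
    have hg5nn : 0 ≤ (t j₀ : ℤ) * (Rw n k B j₀ - max (D - q j₀) 0) := by
      apply mul_nonneg (Int.ofNat_nonneg _)
      have h3 := max_le (hqr j₀) (hRnn j₀)
      omega
    rcases le_or_gt 0 (D - Rw n k B i₀) with hcase | hcase
    · -- q i₀ = D - R i₀ : slack at source edge is ≥ 2
      have hqi : q i₀ = D - Rw n k B i₀ := by rw [hq]; exact max_eq_left hcase
      have h2 : 2 ≤ Lw n k B i₀ - q i₀ := by omega
      have hterm1 : 2 ≤ (s i₀ : ℤ) * (Lw n k B i₀ - q i₀) := by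
        calc (2 : ℤ) ≤ Lw n k B i₀ - q i₀ := h2
          _ = 1 * (Lw n k B i₀ - q i₀) := (one_mul _).symm
          _ ≤ (s i₀ : ℤ) * (Lw n k B i₀ - q i₀) :=
              mul_le_mul_of_nonneg_right hs1 (by omega)
      linarith
    · have hqi : q i₀ = 0 := by rw [hq]; exact max_eq_right (by omega)
      have hRge : D + 1 ≤ Rw n k B i₀ := by omega
      rcases le_or_gt 2 (Lw n k B i₀) with hL2 | hL2
      · have hterm1 : 2 ≤ (s i₀ : ℤ) * (Lw n k B i₀ - q i₀) := by
          calc (2 : ℤ) ≤ Lw n k B i₀ - q i₀ := by omega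
            _ = 1 * (Lw n k B i₀ - q i₀) := (one_mul _).symm
            _ ≤ (s i₀ : ℤ) * (Lw n k B i₀ - q i₀) :=
                mul_le_mul_of_nonneg_right hs1 (by omega)
        linarith
      · have hL1 : Lw n k B i₀ = 1 := by omega
        have hterm1 : 1 ≤ (s i₀ : ℤ) * (Lw n k B i₀ - q i₀) := by
          have hh : Lw n k B i₀ - q i₀ = 1 := by omega
          rw [hh, mul_one]; exact hs1
        rcases le_or_gt (q j₀) 0 with hqj | hqj
        · have hqj0 : q j₀ = 0 := le_antisymm hqj (hq0 j₀)
          rcases le_or_gt 1 (Ww n k B i₀ j₀) with hW1 | hW1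
          · have habs : |q i₀ - q j₀| = 0 := by rw [hqi, hqj0]; simp
            have hterm3 : 1 ≤ (e i₀ j₀ : ℤ) * (Ww n k B i₀ j₀ - |q i₀ - q j₀|) := by
              calc (1 : ℤ) ≤ Ww n k B i₀ j₀ - |q i₀ - q j₀| := by omega
                _ = 1 * _ := (one_mul _).symm
                _ ≤ (e i₀ j₀ : ℤ) * (Ww n k B i₀ j₀ - |q i₀ - q j₀|) :=
                    mul_le_mul_of_nonneg_right he1 (by omega)
            linarith
          · have hWz : Ww n k B i₀ j₀ = 0 := le_antisymm (by omega) (hWnn i₀ j₀)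
            have hBeq : B j₀ = B i₀ := Aux7.W_eq_zero B i₀ j₀ hWz
            have hLj : Lw n k B j₀ = Lw n k B i₀ := by unfold Lw; rw [hBeq]
            have hRj : Rw n k B j₀ = Rw n k B i₀ := by unfold Rw; rw [hBeq]
            have hst' : (1 : ℤ) ≤ (s j₀ : ℤ) + (t j₀ : ℤ) := by
              have := hst j₀; push_cast; omega
            have hterm4 : (s j₀ : ℤ) ≤ (s j₀ : ℤ) * (Lw n k B j₀ - q j₀) := by
              have hh : Lw n k B j₀ - q j₀ = 1 := by omega
              rw [hh, mul_one]
            have hterm5 : (t j₀ : ℤ) ≤ (t j₀ : ℤ) * (Rw n k B j₀ - max (D - q j₀) 0) := by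
              have h1 : max (D - q j₀) 0 = D := by
                rw [hqj0, sub_zero]; exact max_eq_left hDnn
              have h2 : 1 ≤ Rw n k B j₀ - max (D - q j₀) 0 := by omega
              calc (t j₀ : ℤ) = (t j₀ : ℤ) * 1 := (mul_one _).symm
                _ ≤ _ := mul_le_mul_of_nonneg_left h2 (Int.ofNat_nonneg _)
            linarith
        · have hqj' : q j₀ = D - Rw n k B j₀ := by
            rcases le_or_gt (D - Rw n k B j₀) 0 with h | h
            · exfalso
              have : q j₀ = 0 := by rw [hq]; exact max_eq_right h
              omega
            · rw [hq]; exact max_eq_left h.le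
          have hWge : q j₀ + 1 ≤ Ww n k B i₀ j₀ := by
            have h4 := Aux7.R_tri B j₀ i₀
            have h5 := Aux7.W_symm B i₀ j₀
            omega
          have habs : |q i₀ - q j₀| = q j₀ := by
            rw [hqi, zero_sub, abs_neg, abs_of_nonneg (hq0 j₀)]
          have hterm3 : 1 ≤ (e i₀ j₀ : ℤ) * (Ww n k B i₀ j₀ - |q i₀ - q j₀|) := by
            calc (1 : ℤ) ≤ Ww n k B i₀ j₀ - |q i₀ - q j₀| := by omega
              _ = 1 * _ := (one_mul _).symm
              _ ≤ (e i₀ j₀ : ℤ) * (Ww n k B i₀ j₀ - |q i₀ - q j₀|) :=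
                  mul_le_mul_of_nonneg_right he1 (by omega)
          linarith
  · -- s i₀ = 0, use t i₀ ≥ 1 and the potential p i = min (L i) D
    have ht : 1 ≤ t i₀ := by have := hst i₀; omega
    have ht1 : (1 : ℤ) ≤ (t i₀ : ℤ) := by exact_mod_cast ht
    set p : Fin k → ℤ := fun i => min (Lw n k B i) D with hp
    have hp0 : ∀ i, 0 ≤ p i := fun i => le_min (hLnn i) hDnn
    have hpl : ∀ i, p i ≤ Lw n k B i := fun i => min_le_left _ _
    have hpr : ∀ i, D - p i ≤ Rw n k B i := by
      intro i
      rcases le_total (Lw n k B i) D with h | h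
      · rw [hp]
        simp only []
        rw [min_eq_left h]
        have := hLR i; omega
      · rw [hp]
        simp only []
        rw [min_eq_right h]
        have := hRnn i; omega
    have hpw : ∀ i j, |p i - p j| ≤ Ww n k B i j := by
      intro i j
      rw [abs_sub_le_iff]
      constructor
      · rcases le_total (Lw n k B j) D with h | h
        · have hmj : p j = Lw n k B j := by rw [hp]; simp only []; exact min_eq_left h
          have h1 := Aux7.L_tri B j i
          have h2 := Aux7.W_symm B i j
          have h3 : p i ≤ Lw n k B i := hpl i
          omega
        · have hmj : p j = D := by rw [hp]; simp only []; exact min_eq_right h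
          have h3 : p i ≤ D := by rw [hp]; simp only []; exact min_le_right _ _
          have := hWnn i j
          omega
      · rcases le_total (Lw n k B i) D with h | h
        · have hmi : p i = Lw n k B i := by rw [hp]; simp only []; exact min_eq_left h
          have h1 := Aux7.L_tri B i j
          have h3 : p j ≤ Lw n k B j := hpl j
          omega
        · have hmi : p i = D := by rw [hp]; simp only []; exact min_eq_right h
          have h3 : p j ≤ D := by rw [hp]; simp only []; exact min_le_right _ _
          have := hWnn i j
          omega
    have hm := Aux6.master n k s t e hsym B D hWnn (Aux7.W_symm B) p hp0 hpl hpr hpw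
      i₀ j₀ hne f hf
    have hg1nn : 0 ≤ (s i₀ : ℤ) * (Lw n k B i₀ - p i₀) :=
      mul_nonneg (Int.ofNat_nonneg _) (by have := hpl i₀; omega)
    have hg2nn : 0 ≤ (t i₀ : ℤ) * (Rw n k B i₀ - max (D - p i₀) 0) := by
      apply mul_nonneg (Int.ofNat_nonneg _)
      have h3 := max_le (hpr i₀) (hRnn i₀)
      omega
    have hg3nn : 0 ≤ (e i₀ j₀ : ℤ) * (Ww n k B i₀ j₀ - |p i₀ - p j₀|) :=
      mul_nonneg (Int.ofNat_nonneg _) (by have := hpw i₀ j₀; omega)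
    have hg4nn : 0 ≤ (s j₀ : ℤ) * (Lw n k B j₀ - p j₀) :=
      mul_nonneg (Int.ofNat_nonneg _) (by have := hpl j₀; omega)
    have hg5nn : 0 ≤ (t j₀ : ℤ) * (Rw n k B j₀ - max (D - p j₀) 0) := by
      apply mul_nonneg (Int.ofNat_nonneg _)
      have h3 := max_le (hpr j₀) (hRnn j₀)
      omega
    rcases le_total (Lw n k B i₀) D with hcase | hcase
    · have hpi : p i₀ = Lw n k B i₀ := by rw [hp]; simp only []; exact min_eq_left hcase
      have hmax : max (D - p i₀) 0 = D - p i₀ := max_eq_left (by omega)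
      have h2 : 2 ≤ Rw n k B i₀ - max (D - p i₀) 0 := by omega
      have hterm2 : 2 ≤ (t i₀ : ℤ) * (Rw n k B i₀ - max (D - p i₀) 0) := by
        calc (2 : ℤ) ≤ Rw n k B i₀ - max (D - p i₀) 0 := h2
          _ = 1 * _ := (one_mul _).symm
          _ ≤ (t i₀ : ℤ) * (Rw n k B i₀ - max (D - p i₀) 0) :=
              mul_le_mul_of_nonneg_right ht1 (by omega)
      linarith
    · have hpi : p i₀ = D := by rw [hp]; simp only []; exact min_eq_right hcase
      have hmax : max (D - p i₀) 0 = 0 := by rw [hpi]; simp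
      rcases le_or_gt 2 (Rw n k B i₀) with hR2 | hR2
      · have hterm2 : 2 ≤ (t i₀ : ℤ) * (Rw n k B i₀ - max (D - p i₀) 0) := by
          calc (2 : ℤ) ≤ Rw n k B i₀ - max (D - p i₀) 0 := by omega
            _ = 1 * _ := (one_mul _).symm
            _ ≤ (t i₀ : ℤ) * (Rw n k B i₀ - max (D - p i₀) 0) :=
                mul_le_mul_of_nonneg_right ht1 (by omega)
        linarith
      · have hR1 : Rw n k B i₀ = 1 := by omega
        have hLge : D + 1 ≤ Lw n k B i₀ := by omega
        have hterm2 : 1 ≤ (t i₀ : ℤ) * (Rw n k B i₀ - max (D - p i₀) 0) := by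
          have hh : Rw n k B i₀ - max (D - p i₀) 0 = 1 := by omega
          rw [hh, mul_one]; exact ht1
        rcases le_total (Lw n k B j₀) D with hLj | hLj
        · have hpj : p j₀ = Lw n k B j₀ := by rw [hp]; simp only []; exact min_eq_left hLj
          have habs : |p i₀ - p j₀| = D - p j₀ := by
            rw [hpi]; exact abs_of_nonneg (by omega)
          have hWge : D - p j₀ + 1 ≤ Ww n k B i₀ j₀ := by
            have h4 := Aux7.L_tri B j₀ i₀
            have h5 := Aux7.W_symm B i₀ j₀
            omega
          have hterm3 : 1 ≤ (e i₀ j₀ : ℤ) * (Ww n k B i₀ j₀ - |p i₀ - p j₀|) := by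
            calc (1 : ℤ) ≤ Ww n k B i₀ j₀ - |p i₀ - p j₀| := by omega
              _ = 1 * _ := (one_mul _).symm
              _ ≤ (e i₀ j₀ : ℤ) * (Ww n k B i₀ j₀ - |p i₀ - p j₀|) :=
                  mul_le_mul_of_nonneg_right he1 (by omega)
          linarith
        · have hpj : p j₀ = D := by rw [hp]; simp only []; exact min_eq_right hLj
          have habs : |p i₀ - p j₀| = 0 := by rw [hpi, hpj]; simp
          rcases le_or_gt 1 (Ww n k B i₀ j₀) with hW1 | hW1
          · have hterm3 : 1 ≤ (e i₀ j₀ : ℤ) * (Ww n k B i₀ j₀ - |p i₀ - p j₀|) := by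
              calc (1 : ℤ) ≤ Ww n k B i₀ j₀ - |p i₀ - p j₀| := by omega
                _ = 1 * _ := (one_mul _).symm
                _ ≤ (e i₀ j₀ : ℤ) * (Ww n k B i₀ j₀ - |p i₀ - p j₀|) :=
                    mul_le_mul_of_nonneg_right he1 (by omega)
            linarith
          · have hWz : Ww n k B i₀ j₀ = 0 := le_antisymm (by omega) (hWnn i₀ j₀)
            have hBeq : B j₀ = B i₀ := Aux7.W_eq_zero B i₀ j₀ hWz
            have hLjeq : Lw n k B j₀ = Lw n k B i₀ := by unfold Lw; rw [hBeq]
            have hRjeq : Rw n k B j₀ = Rw n k B i₀ := by unfold Rw; rw [hBeq]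
            have hst' : (1 : ℤ) ≤ (s j₀ : ℤ) + (t j₀ : ℤ) := by
              have := hst j₀; push_cast; omega
            have hterm4 : (s j₀ : ℤ) ≤ (s j₀ : ℤ) * (Lw n k B j₀ - p j₀) := by
              have h2 : 1 ≤ Lw n k B j₀ - p j₀ := by omega
              calc (s j₀ : ℤ) = (s j₀ : ℤ) * 1 := (mul_one _).symm
                _ ≤ _ := mul_le_mul_of_nonneg_left h2 (Int.ofNat_nonneg _)
            have hterm5 : (t j₀ : ℤ) ≤ (t j₀ : ℤ) * (Rw n k B j₀ - max (D - p j₀) 0) := by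
              have h1 : max (D - p j₀) 0 = 0 := by rw [hpj]; simp
              have h2 : Rw n k B j₀ - max (D - p j₀) 0 = 1 := by omega
              rw [h2, mul_one]
            linarith

end Aux8

theorem FnnOne_connected_flow_bound (n k : ℕ) (hn : 1 ≤ n) (hk : 1 ≤ k)
    (s t : Fin k → ℕ) (e : Fin k → Fin k → ℕ)
    (hsym : ∀ i j, i ≠ j → e i j = e j i)
    (hst : ∀ i, 0 < s i + t i)
    (he : ∀ i, 0 < ∑ j ∈ Finset.univ.erase i, e i j)
    (B : Fin k → Equiv.Perm (Fin n ⊕ Fin n))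
    (hconn : ∃ i, IsConnectedPerm (B i)) :
    (∀ (f : NetVertex k → NetVertex k → ℤ), IsFlow (netCap s t e) f →
        flowValue f * (2 * n - 2) + 2 ≤ (FnnOne n k s t e B : ℤ)) ∧
      (∀ X : ℤ, IsGreatest {v : ℤ | ∃ f, IsFlow (netCap s t e) f ∧ flowValue f = v} X →
        X * (2 * n - 2) - (FnnOne n k s t e B : ℤ) ≤ -2) := by
  constructor
  · exact fun f hf => Aux8.bullet1 n k hn s t e hsym hst he B hconn f hf
  · intro X hX
    obtain ⟨f, hf, hfv⟩ := hX.1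
    have h := Aux8.bullet1 n k hn s t e hsym hst he B hconn f hf
    rw [hfv] at h
    linarith
end
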